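/- Suppose the small-set assumption and the one-step drift condition (D) hold, and π is an invariant probability measure for P. Then the constant n₀ := E_ν τ_1²/E_ν τ_1 − 1 of the split chain satisfies n₀ ≤ 2·[ λ·(π(V) − 1)/(1 − λ) + (K − λ)/(β·(1 − λ)) − 1 ]. -/

import Mathlib

open MeasureTheory ProbabilityTheory Set ENNReal

/-- The σ-algebra generated by `X 0, …, X n` and `G 0, …, G (n-1)`
(the past of the split chain just before the regeneration indicator `G n` is drawn). -/
def pastBeforeG {Ω 𝒳 : Type*} [MeasurableSpace 𝒳] (X : ℕ → Ω → 𝒳) (G : ℕ → Ω → Bool)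
    (n : ℕ) : MeasurableSpace Ω :=
  (⨆ i ∈ Set.Iic n, MeasurableSpace.comap (X i) inferInstance) ⊔
    (⨆ i ∈ Set.Iio n, MeasurableSpace.comap (G i) inferInstance)

/-- The σ-algebra generated by `X 0, …, X n` and `G 0, …, G n`. -/
def pastXG {Ω 𝒳 : Type*} [MeasurableSpace 𝒳] (X : ℕ → Ω → 𝒳) (G : ℕ → Ω → Bool)
    (n : ℕ) : MeasurableSpace Ω :=
  (⨆ i ∈ Set.Iic n, MeasurableSpace.comap (X i) inferInstance) ⊔
    (⨆ i ∈ Set.Iic n, MeasurableSpace.comap (G i) inferInstance)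

/-- The normalized residualKer kernel `Q(x,·) = (P(x,·) − β·1_J(x)·ν(·)) / (1 − β·1_J(x))`. -/
noncomputable def residualKer {𝒳 : Type*} [MeasurableSpace 𝒳] (P : Kernel 𝒳 𝒳) (J : Set 𝒳)
    (β : ℝ) (ν : Measure 𝒳) (x : 𝒳) (A : Set 𝒳) : ℝ≥0∞ :=
  (P x A - ENNReal.ofReal β * J.indicator (fun _ => (1 : ℝ≥0∞)) x * ν A) /
    (1 - ENNReal.ofReal β * J.indicator (fun _ => (1 : ℝ≥0∞)) x)

/-- `(X, G)` is a version of the split chain of Nummelin/Athreya–Ney associated to the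
kernel `P`, small set `J`, minorization constant `β` and minorizing measure `ν`:
given the past up to `X n`, the regeneration indicator `G n` equals `true` with probability
`β·1_J(X n)`; given the past up to `(X n, G n)`, the next state `X (n+1)` is distributed
according to `ν` if `G n = true` and according to the residualKer kernel `Q(X n, ·)` otherwise.
Moreover (the chain being assumed π-irreducible and recurrent in the paper) regenerations
occur infinitely often almost surely. -/
structure IsSplitChain {Ω 𝒳 : Type*} [MeasurableSpace Ω] [MeasurableSpace 𝒳] (μ : Measure Ω)
    (P : Kernel 𝒳 𝒳) (J : Set 𝒳) (β : ℝ) (ν : Measure 𝒳)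
    (X : ℕ → Ω → 𝒳) (G : ℕ → Ω → Bool) : Prop where
  measX : ∀ n, Measurable (X n)
  measG : ∀ n, Measurable (G n)
  condG : ∀ n, ∀ B : Set Ω, MeasurableSet[pastBeforeG X G n] B →
    μ (B ∩ {ω | G n ω = true}) =
      ∫⁻ ω in B, ENNReal.ofReal β * J.indicator (fun _ => (1 : ℝ≥0∞)) (X n ω) ∂μ
  condX : ∀ n, ∀ A : Set 𝒳, MeasurableSet A → ∀ B : Set Ω, MeasurableSet[pastXG X G n] B →
    μ (B ∩ (X (n+1)) ⁻¹' A) =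
      ∫⁻ ω in B, (if G n ω = true then ν A else residualKer P J β ν (X n ω) A) ∂μ
  recur : ∀ᵐ ω ∂μ, ∀ m : ℕ, ∃ n : ℕ, m < n ∧ G (n - 1) ω = true

/-- The regeneration epochs: `T 0 = 0` and `T k = min{n > T (k-1) : G (n-1) = true}`. -/
noncomputable def regTime {Ω : Type*} (G : ℕ → Ω → Bool) : ℕ → Ω → ℕ
  | 0 => fun _ => 0
  | (k + 1) => fun ω => sInf {n : ℕ | regTime G k ω < n ∧ G (n - 1) ω = true}

/-- `R(n) = min{r ≥ 1 : T r ≥ n}`, the number of the first regeneration epoch `≥ n`. -/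
noncomputable def hitNum {Ω : Type*} (G : ℕ → Ω → Bool) (n : ℕ) (ω : Ω) : ℕ :=
  sInf {r : ℕ | 1 ≤ r ∧ n ≤ regTime G r ω}

/-- The first block sum `Ξ₁(f) = ∑_{i=0}^{T 1 − 1} f (X i)`. -/
noncomputable def blockSum1 {Ω 𝒳 : Type*} (f : 𝒳 → ℝ) (X : ℕ → Ω → 𝒳) (G : ℕ → Ω → Bool)
    (ω : Ω) : ℝ :=
  ∑ i ∈ Finset.range (regTime G 1 ω), f (X i ω)

/-- The regenerative-sequential estimator
`θ̂_{T_{R(n)}} = (1 / T_{R(n)}) ∑_{i=0}^{T_{R(n)} − 1} f (X i)`. -/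
noncomputable def regEstimator {Ω 𝒳 : Type*} (f : 𝒳 → ℝ) (X : ℕ → Ω → 𝒳) (G : ℕ → Ω → Bool)
    (n : ℕ) (ω : Ω) : ℝ :=
  (regTime G (hitNum G n ω) ω : ℝ)⁻¹ *
    ∑ i ∈ Finset.range (regTime G (hitNum G n ω) ω), f (X i ω)

namespace SplitDrift

/-! ### ENNReal helper lemmas -/

lemma tsub_le_tsub_of_add_le {A A' b b' : ℝ≥0∞} (hb' : b' ≠ ∞) (hb'A' : b' ≤ A')
    (h : A + b' ≤ A' + b) : A - b ≤ A' - b' := by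
  rw [tsub_le_iff_right]
  calc A = (A + b') - b' := (ENNReal.add_sub_cancel_right hb').symm
    _ ≤ (A' + b) - b' := tsub_le_tsub h le_rfl
    _ = (A' - b') + b := by rw [ENNReal.sub_add_eq_add_sub hb'A' hb']

lemma add_tsub_add_eq {A B a b : ℝ≥0∞} (ha : a ≠ ∞) (hb : b ≠ ∞) (haA : a ≤ A) (hbB : b ≤ B) :
    (A + B) - (a + b) = (A - a) + (B - b) := by
  have h1 : A + B = (a + b) + ((A - a) + (B - b)) := by
    conv_lhs => rw [← add_tsub_cancel_of_le haA, ← add_tsub_cancel_of_le hbB]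
    ring
  rw [h1, ENNReal.add_sub_cancel_left (by simp [ha, hb, lt_top_iff_ne_top])]

lemma mul_tsub_of_le {c A b : ℝ≥0∞} (hc : c ≠ ∞) : c * (A - b) = c * A - c * b :=
  ENNReal.mul_sub (fun _ _ => hc)

variable {𝒳 : Type*} [MeasurableSpace 𝒳]

/-! ### The indicator weight and the residual operator -/

noncomputable def bJ (J : Set 𝒳) (β : ℝ) (x : 𝒳) : ℝ≥0∞ :=
  ENNReal.ofReal β * J.indicator (fun _ => (1 : ℝ≥0∞)) x

lemma bJ_mem {J : Set 𝒳} {β : ℝ} {x : 𝒳} (hx : x ∈ J) : bJ J β x = ENNReal.ofReal β := by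
  simp [bJ, Set.indicator_of_mem hx]

lemma bJ_not_mem {J : Set 𝒳} {β : ℝ} {x : 𝒳} (hx : x ∉ J) : bJ J β x = 0 := by
  simp [bJ, Set.indicator_of_notMem hx]

lemma bJ_le_one {J : Set 𝒳} {β : ℝ} (hβ1 : β ≤ 1) (x : 𝒳) : bJ J β x ≤ 1 := by
  by_cases hx : x ∈ J
  · rw [bJ_mem hx]; exact ENNReal.ofReal_le_one.2 hβ1
  · rw [bJ_not_mem hx]; exact zero_le_one

lemma bJ_ne_top {J : Set 𝒳} {β : ℝ} (x : 𝒳) : bJ J β x ≠ ∞ := by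
  by_cases hx : x ∈ J
  · simp [bJ_mem hx]
  · simp [bJ_not_mem hx]

lemma measurable_bJ {J : Set 𝒳} (hJ : MeasurableSet J) {β : ℝ} : Measurable (bJ J β) :=
  measurable_const.mul (measurable_const.indicator hJ)

variable (P : Kernel 𝒳 𝒳) (J : Set 𝒳) (β : ℝ) (ν : Measure 𝒳)

/-- The sub-Markovian operator `R f = P f - β 1_J ν(f)`. -/
noncomputable def Rop (f : 𝒳 → ℝ≥0∞) : 𝒳 → ℝ≥0∞ :=
  fun x => (∫⁻ y, f y ∂(P x)) - bJ J β x * ∫⁻ y, f y ∂ν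

/-- Iterates of `Rop`. -/
noncomputable def Rpow : ℕ → (𝒳 → ℝ≥0∞) → 𝒳 → ℝ≥0∞
  | 0, f => f
  | (n+1), f => Rpow n (Rop P J β ν f)

variable {P J β ν}

lemma Rpow_zero (f : 𝒳 → ℝ≥0∞) : Rpow P J β ν 0 f = f := rfl

lemma Rpow_succ (n : ℕ) (f : 𝒳 → ℝ≥0∞) :
    Rpow P J β ν (n+1) f = Rpow P J β ν n (Rop P J β ν f) := rfl

lemma Rpow_succ_comm (n : ℕ) (f : 𝒳 → ℝ≥0∞) :
    Rpow P J β ν (n+1) f = Rop P J β ν (Rpow P J β ν n f) := by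
  induction n generalizing f with
  | zero => rfl
  | succ n ih => rw [Rpow_succ, ih (Rop P J β ν f)]; rfl

lemma Rpow_comp (k m : ℕ) (f : 𝒳 → ℝ≥0∞) :
    Rpow P J β ν k (Rpow P J β ν m f) = Rpow P J β ν (m + k) f := by
  induction m generalizing f with
  | zero => rw [Nat.zero_add]; rfl
  | succ m ih =>
    rw [Rpow_succ, ih (Rop P J β ν f)]
    have h : m + 1 + k = (m + k) + 1 := by omega
    rw [h, Rpow_succ]

end SplitDrift
namespace SplitDrift
variable {𝒳 : Type*} [MeasurableSpace 𝒳]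

/-- smallness hypothesis in measure form -/
def SmallHyp (P : Kernel 𝒳 𝒳) (J : Set 𝒳) (β : ℝ) (ν : Measure 𝒳) : Prop :=
  ∀ x : 𝒳, (bJ J β x) • ν ≤ P x

variable {P : Kernel 𝒳 𝒳} {J : Set 𝒳} {β : ℝ} {ν : Measure 𝒳}

lemma SmallHyp.lint (hsm : SmallHyp P J β ν) (x : 𝒳) (f : 𝒳 → ℝ≥0∞) :
    bJ J β x * ∫⁻ y, f y ∂ν ≤ ∫⁻ y, f y ∂(P x) := by
  rw [← smul_eq_mul, ← lintegral_smul_measure]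
  exact lintegral_mono' (hsm x) le_rfl

lemma measurable_lint_kernel {f : 𝒳 → ℝ≥0∞} (hf : Measurable f) :
    Measurable fun x => ∫⁻ y, f y ∂(P x) :=
  (Measure.measurable_lintegral hf).comp P.measurable

lemma Rop_measurable (hJ : MeasurableSet J) {f : 𝒳 → ℝ≥0∞} (hf : Measurable f) :
    Measurable (Rop P J β ν f) :=
  (measurable_lint_kernel hf).sub ((measurable_bJ hJ).mul_const _)

lemma Rpow_measurable (hJ : MeasurableSet J) {f : 𝒳 → ℝ≥0∞} (hf : Measurable f) (n : ℕ) :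
    Measurable (Rpow P J β ν n f) := by
  induction n generalizing f with
  | zero => exact hf
  | succ n ih => exact ih (Rop_measurable hJ hf)

lemma Rop_le_lint (f : 𝒳 → ℝ≥0∞) (x : 𝒳) : Rop P J β ν f x ≤ ∫⁻ y, f y ∂(P x) :=
  tsub_le_self

lemma Rop_le_const [IsMarkovKernel P] {f : 𝒳 → ℝ≥0∞} {C : ℝ≥0∞} (hC : ∀ y, f y ≤ C) :
    ∀ x, Rop P J β ν f x ≤ C := by
  intro x
  refine le_trans (Rop_le_lint f x) (le_trans (lintegral_mono hC) ?_)
  simp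

lemma Rpow_le_const [IsMarkovKernel P] {f : 𝒳 → ℝ≥0∞} {C : ℝ≥0∞} (hC : ∀ y, f y ≤ C) (n : ℕ) :
    ∀ x, Rpow P J β ν n f x ≤ C := by
  induction n generalizing f with
  | zero => exact hC
  | succ n ih => exact ih (Rop_le_const hC)

lemma Rop_mono (hsm : SmallHyp P J β ν) {f g : 𝒳 → ℝ≥0∞} (hf : Measurable f)
    (hfg : ∀ x, f x ≤ g x) (hνg : ∫⁻ y, g y ∂ν ≠ ∞) (x : 𝒳) :
    Rop P J β ν f x ≤ Rop P J β ν g x := by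
  have hgd : ∀ y, g y = f y + (g y - f y) := fun y => (add_tsub_cancel_of_le (hfg y)).symm
  have hPg : ∫⁻ y, g y ∂(P x) = ∫⁻ y, f y ∂(P x) + ∫⁻ y, (g y - f y) ∂(P x) := by
    conv_lhs => rw [lintegral_congr hgd]
    exact lintegral_add_left hf _
  have hνgd : ∫⁻ y, g y ∂ν = ∫⁻ y, f y ∂ν + ∫⁻ y, (g y - f y) ∂ν := by
    conv_lhs => rw [lintegral_congr hgd]
    exact lintegral_add_left hf _
  have hb' : bJ J β x * ∫⁻ y, g y ∂ν ≠ ∞ :=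
    ENNReal.mul_ne_top (bJ_ne_top x) hνg
  refine tsub_le_tsub_of_add_le hb' (hsm.lint x g) ?_
  rw [hPg, hνgd, mul_add]
  calc ∫⁻ y, f y ∂(P x) + (bJ J β x * ∫⁻ y, f y ∂ν + bJ J β x * ∫⁻ y, (g y - f y) ∂ν)
      ≤ ∫⁻ y, f y ∂(P x) + (bJ J β x * ∫⁻ y, f y ∂ν + ∫⁻ y, (g y - f y) ∂(P x)) := by
        gcongr
        exact hsm.lint x _
    _ = ∫⁻ y, f y ∂(P x) + ∫⁻ y, (g y - f y) ∂(P x) + bJ J β x * ∫⁻ y, f y ∂ν := by ring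

lemma Rop_add (hsm : SmallHyp P J β ν) {f g : 𝒳 → ℝ≥0∞} (hf : Measurable f)
    (hνf : ∫⁻ y, f y ∂ν ≠ ∞) (hνg : ∫⁻ y, g y ∂ν ≠ ∞) :
    Rop P J β ν (fun x => f x + g x) = fun x => Rop P J β ν f x + Rop P J β ν g x := by
  funext x
  show (∫⁻ y, f y + g y ∂(P x)) - bJ J β x * ∫⁻ y, (fun y => f y + g y) y ∂ν = _
  rw [lintegral_add_left hf, lintegral_add_left hf, mul_add]
  exact add_tsub_add_eq (ENNReal.mul_ne_top (bJ_ne_top x) hνf)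
    (ENNReal.mul_ne_top (bJ_ne_top x) hνg) (hsm.lint x f) (hsm.lint x g)

lemma Rop_smul {c : ℝ≥0∞} (hc : c ≠ ∞) {f : 𝒳 → ℝ≥0∞} (hf : Measurable f) :
    Rop P J β ν (fun x => c * f x) = fun x => c * Rop P J β ν f x := by
  funext x
  show (∫⁻ y, c * f y ∂(P x)) - bJ J β x * ∫⁻ y, c * f y ∂ν = _
  rw [lintegral_const_mul c hf, lintegral_const_mul c hf]
  show _ = c * ((∫⁻ y, f y ∂(P x)) - bJ J β x * ∫⁻ y, f y ∂ν)
  rw [mul_tsub_of_le hc]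
  congr 1
  ring

lemma Rpow_mono (hsm : SmallHyp P J β ν) (hJ : MeasurableSet J) {f g : 𝒳 → ℝ≥0∞}
    (hf : Measurable f) (hg : Measurable g) (hfg : ∀ x, f x ≤ g x)
    (hfin : ∀ j, ∫⁻ y, Rpow P J β ν j g y ∂ν ≠ ∞) (n : ℕ) (x : 𝒳) :
    Rpow P J β ν n f x ≤ Rpow P J β ν n g x := by
  induction n generalizing x with
  | zero => exact hfg x
  | succ n ih =>
    rw [Rpow_succ_comm, Rpow_succ_comm]
    refine Rop_mono hsm (Rpow_measurable hJ hf n) ih ?_ x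
    exact hfin n

lemma Rpow_add (hsm : SmallHyp P J β ν) (hJ : MeasurableSet J) {f g : 𝒳 → ℝ≥0∞}
    (hf : Measurable f) (hg : Measurable g)
    (hνf : ∀ j, ∫⁻ y, Rpow P J β ν j f y ∂ν ≠ ∞)
    (hνg : ∀ j, ∫⁻ y, Rpow P J β ν j g y ∂ν ≠ ∞) (n : ℕ) :
    Rpow P J β ν n (fun x => f x + g x) =
      fun x => Rpow P J β ν n f x + Rpow P J β ν n g x := by
  induction n generalizing f g with
  | zero => rfl
  | succ n ih =>
    have h0f : ∫⁻ y, f y ∂ν ≠ ∞ := hνf 0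
    have h0g : ∫⁻ y, g y ∂ν ≠ ∞ := hνg 0
    calc Rpow P J β ν (n+1) (fun x => f x + g x)
        = Rpow P J β ν n (fun x => Rop P J β ν f x + Rop P J β ν g x) := by
          rw [Rpow_succ, Rop_add hsm hf h0f h0g]
      _ = fun x => Rpow P J β ν n (Rop P J β ν f) x + Rpow P J β ν n (Rop P J β ν g) x :=
          ih (Rop_measurable hJ hf) (Rop_measurable hJ hg)
            (fun j => hνf (j+1)) (fun j => hνg (j+1))
      _ = fun x => Rpow P J β ν (n+1) f x + Rpow P J β ν (n+1) g x := rfl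

lemma Rpow_smul (hJ : MeasurableSet J) {c : ℝ≥0∞} (hc : c ≠ ∞) {f : 𝒳 → ℝ≥0∞}
    (hf : Measurable f) (n : ℕ) :
    Rpow P J β ν n (fun x => c * f x) = fun x => c * Rpow P J β ν n f x := by
  induction n generalizing f with
  | zero => rfl
  | succ n ih =>
    calc Rpow P J β ν (n+1) (fun x => c * f x)
        = Rpow P J β ν n (fun x => c * Rop P J β ν f x) := by
          rw [Rpow_succ, Rop_smul hc hf]
      _ = fun x => c * Rpow P J β ν n (Rop P J β ν f) x := ih (Rop_measurable hJ hf)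
      _ = fun x => c * Rpow P J β ν (n+1) f x := rfl

lemma Rop_one [IsMarkovKernel P] [IsProbabilityMeasure ν] :
    Rop P J β ν (fun _ => (1 : ℝ≥0∞)) = fun x => 1 - bJ J β x := by
  funext x
  show (∫⁻ _, (1:ℝ≥0∞) ∂(P x)) - bJ J β x * ∫⁻ _, (1:ℝ≥0∞) ∂ν = _
  simp

end SplitDrift
namespace SplitDrift

section Bridge

variable {Ω 𝒳 : Type*} [mΩ : MeasurableSpace Ω] [MeasurableSpace 𝒳]

/-- Extension of a conditional-probability identity from sets to nonnegative functions
measurable w.r.t. the sub-σ-algebra. -/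
lemma lintegral_cond (μ : Measure Ω) (m' : MeasurableSpace Ω)
    (hm' : m' ≤ mΩ) {C : Set Ω}
    {g : Ω → ℝ≥0∞} (hg : Measurable[mΩ] g)
    (h : ∀ B, MeasurableSet[m'] B → μ (B ∩ C) = ∫⁻ ω in B, g ω ∂μ)
    {φ : Ω → ℝ≥0∞} (hφ : Measurable[m'] φ) :
    ∫⁻ ω in C, φ ω ∂μ = ∫⁻ ω, φ ω * g ω ∂μ := by
  have h1 : (μ.restrict C).trim hm' = (μ.withDensity g).trim hm' := by
    refine Measure.ext fun s hs => ?_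
    rw [trim_measurableSet_eq hm' hs, trim_measurableSet_eq hm' hs,
      Measure.restrict_apply (hm' s hs), withDensity_apply g (hm' s hs)]
    exact h s hs
  calc ∫⁻ ω in C, φ ω ∂μ = ∫⁻ ω, φ ω ∂((μ.restrict C).trim hm') :=
        (lintegral_trim hm' hφ).symm
    _ = ∫⁻ ω, φ ω ∂((μ.withDensity g).trim hm') := by rw [h1]
    _ = ∫⁻ ω, φ ω ∂(μ.withDensity g) := lintegral_trim hm' hφ
    _ = ∫⁻ ω, (g * φ) ω ∂μ := lintegral_withDensity_eq_lintegral_mul μ hg (hφ.mono hm' le_rfl)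
    _ = ∫⁻ ω, φ ω * g ω ∂μ := by simp only [Pi.mul_apply, mul_comm]

variable {X : ℕ → Ω → 𝒳} {G : ℕ → Ω → Bool}

lemma pastBeforeG_le (hX : ∀ n, Measurable (X n)) (hG : ∀ n, Measurable (G n)) (n : ℕ) :
    pastBeforeG X G n ≤ mΩ :=
  sup_le (iSup_le fun i => iSup_le fun _ => measurable_iff_comap_le.1 (hX i))
    (iSup_le fun i => iSup_le fun _ => measurable_iff_comap_le.1 (hG i))

lemma pastXG_le (hX : ∀ n, Measurable (X n)) (hG : ∀ n, Measurable (G n)) (n : ℕ) :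
    pastXG X G n ≤ mΩ :=
  sup_le (iSup_le fun i => iSup_le fun _ => measurable_iff_comap_le.1 (hX i))
    (iSup_le fun i => iSup_le fun _ => measurable_iff_comap_le.1 (hG i))

lemma measurable_X_pastBeforeG (n i : ℕ) (hin : i ≤ n) :
    Measurable[pastBeforeG X G n] (X i) := by
  refine measurable_iff_comap_le.2 (le_trans ?_ le_sup_left)
  exact le_iSup₂ (f := fun i (_ : i ∈ Set.Iic n) => MeasurableSpace.comap (X i) inferInstance)
    i hin

lemma measurable_G_pastBeforeG (n i : ℕ) (hin : i < n) :
    Measurable[pastBeforeG X G n] (G i) := by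
  refine measurable_iff_comap_le.2 (le_trans ?_ le_sup_right)
  exact le_iSup₂ (f := fun i (_ : i ∈ Set.Iio n) => MeasurableSpace.comap (G i) inferInstance)
    i hin

lemma measurable_X_pastXG (n i : ℕ) (hin : i ≤ n) :
    Measurable[pastXG X G n] (X i) := by
  refine measurable_iff_comap_le.2 (le_trans ?_ le_sup_left)
  exact le_iSup₂ (f := fun i (_ : i ∈ Set.Iic n) => MeasurableSpace.comap (X i) inferInstance)
    i hin

lemma measurable_G_pastXG (n i : ℕ) (hin : i ≤ n) :
    Measurable[pastXG X G n] (G i) := by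
  refine measurable_iff_comap_le.2 (le_trans ?_ le_sup_right)
  exact le_iSup₂ (f := fun i (_ : i ∈ Set.Iic n) => MeasurableSpace.comap (G i) inferInstance)
    i hin

/-- The event that no regeneration indicator fired before time `n`. -/
def An (G : ℕ → Ω → Bool) (n : ℕ) : Set Ω := {ω | ∀ i < n, G i ω = false}

lemma An_zero : An G 0 = Set.univ := by
  ext ω; simp [An]

lemma An_succ (n : ℕ) : An G (n+1) = An G n ∩ {ω | G n ω = false} := by
  ext ω
  simp only [An, Set.mem_setOf_eq, Set.mem_inter_iff, Nat.lt_succ_iff_lt_or_eq]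
  constructor
  · intro h
    exact ⟨fun i hi => h i (Or.inl hi), h n (Or.inr rfl)⟩
  · rintro ⟨h1, h2⟩ i (hi | rfl)
    · exact h1 i hi
    · exact h2

lemma An_measurableSet_past (n : ℕ) : MeasurableSet[pastBeforeG X G n] (An G n) := by
  have : An G n = ⋂ (i : ℕ) (_ : i < n), G i ⁻¹' {false} := by
    ext ω; simp [An]
  rw [this]
  exact MeasurableSet.iInter fun i => MeasurableSet.iInter fun hi =>
    measurable_G_pastBeforeG n i hi (measurableSet_singleton false)

lemma An_measurableSet_pastXG (n : ℕ) : MeasurableSet[pastXG X G n] (An G n) := by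
  have : An G n = ⋂ (i : ℕ) (_ : i < n), G i ⁻¹' {false} := by
    ext ω; simp [An]
  rw [this]
  exact MeasurableSet.iInter fun i => MeasurableSet.iInter fun hi =>
    measurable_G_pastXG n i hi.le (measurableSet_singleton false)

lemma An_measurableSet (hG : ∀ n, Measurable (G n)) (n : ℕ) : MeasurableSet (An G n) := by
  have : An G n = ⋂ (i : ℕ) (_ : i < n), G i ⁻¹' {false} := by
    ext ω; simp [An]
  rw [this]
  exact MeasurableSet.iInter fun i => MeasurableSet.iInter fun _ =>
    (hG i) (measurableSet_singleton false)

end Bridge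

section ResM

open scoped Classical

variable {𝒳 : Type*} [MeasurableSpace 𝒳]
variable (P : Kernel 𝒳 𝒳) (J : Set 𝒳) (β : ℝ) (ν : Measure 𝒳)

/-- The residual measure `Q(x, ·)` as an honest measure. -/
noncomputable def resM (x : 𝒳) : Measure 𝒳 :=
  if x ∈ J then
    (if β < 1 then (1 - ENNReal.ofReal β)⁻¹ • (P x - (bJ J β x) • ν) else 0)
  else P x

variable {P J β ν}

lemma bJ_smul_finite [IsProbabilityMeasure ν] (x : 𝒳) : IsFiniteMeasure ((bJ J β x) • ν) := by
  constructor
  rw [Measure.smul_apply, smul_eq_mul, measure_univ, mul_one]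
  exact lt_of_le_of_ne le_top (bJ_ne_top x)

lemma sub_bJ_apply [IsProbabilityMeasure ν] (hsm : SmallHyp P J β ν) (x : 𝒳) {A : Set 𝒳}
    (hA : MeasurableSet A) :
    (P x - (bJ J β x) • ν) A = P x A - bJ J β x * ν A := by
  haveI := bJ_smul_finite (J := J) (β := β) (ν := ν) x
  rw [Measure.sub_apply hA (hsm x), Measure.smul_apply, smul_eq_mul]

lemma Px_eq_nu [IsMarkovKernel P] [IsProbabilityMeasure ν] (hsm : SmallHyp P J β ν)
    (hβ1 : β ≤ 1) (hβn : ¬ β < 1) {x : 𝒳} (hx : x ∈ J) : P x = ν := by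
  have hβ : β = 1 := le_antisymm hβ1 (not_lt.1 hβn)
  have hle : ν ≤ P x := by
    have := hsm x
    rwa [bJ_mem hx, hβ, ENNReal.ofReal_one, one_smul] at this
  refine Measure.ext fun A hA => le_antisymm ?_ (hle A)
  have h1 : ν Aᶜ ≤ P x Aᶜ := hle Aᶜ
  have h2 : P x A = 1 - P x Aᶜ := by
    rw [← prob_compl_eq_one_sub hA.compl, compl_compl]
  have h3 : ν A = 1 - ν Aᶜ := by
    rw [← prob_compl_eq_one_sub hA.compl, compl_compl]
  rw [h2, h3]
  exact tsub_le_tsub le_rfl h1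

lemma ofReal_lt_one_of_lt {β : ℝ} (hβ : β < 1) : ENNReal.ofReal β < 1 :=
  ENNReal.ofReal_lt_one.2 hβ

lemma resM_eq_residual [IsMarkovKernel P] [IsProbabilityMeasure ν] (hsm : SmallHyp P J β ν)
    (hβ1 : β ≤ 1) (x : 𝒳) {A : Set 𝒳} (hA : MeasurableSet A) :
    resM P J β ν x A = residualKer P J β ν x A := by
  by_cases hx : x ∈ J
  · by_cases hβ : β < 1
    · rw [resM, if_pos hx, if_pos hβ, Measure.smul_apply, smul_eq_mul,
        sub_bJ_apply hsm x hA, residualKer]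
      rw [Set.indicator_of_mem hx, mul_one, bJ_mem hx]
      rw [div_eq_mul_inv, mul_comm]
    · rw [resM, if_pos hx, if_neg hβ, residualKer, Set.indicator_of_mem hx, mul_one]
      have hPν : P x = ν := Px_eq_nu hsm hβ1 hβ hx
      have hβe : β = 1 := le_antisymm hβ1 (not_lt.1 hβ)
      rw [hβe, ENNReal.ofReal_one, one_mul, hPν, tsub_self, ENNReal.zero_div]
      simp
  · rw [resM, if_neg hx, residualKer, Set.indicator_of_notMem hx]
    simp

lemma measurable_resM_coe [IsProbabilityMeasure ν] (hJ : MeasurableSet J)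
    (hsm : SmallHyp P J β ν) {A : Set 𝒳} (hA : MeasurableSet A) :
    Measurable fun x => resM P J β ν x A := by
  by_cases hβ : β < 1
  · have heq : (fun x => resM P J β ν x A) = fun x =>
        if x ∈ J then (1 - ENNReal.ofReal β)⁻¹ * (P x A - bJ J β x * ν A) else P x A := by
      funext x
      by_cases hx : x ∈ J
      · rw [resM, if_pos hx, if_pos hβ, if_pos hx, Measure.smul_apply, smul_eq_mul,
          sub_bJ_apply hsm x hA]
      · rw [resM, if_neg hx, if_neg hx]
    rw [heq]
    refine Measurable.ite hJ ?_ (P.measurable_coe hA)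
    exact (measurable_const.mul ((P.measurable_coe hA).sub
      ((measurable_bJ hJ).mul_const _)))
  · have heq : (fun x => resM P J β ν x A) = fun x => if x ∈ J then 0 else P x A := by
      funext x
      by_cases hx : x ∈ J
      · rw [resM, if_pos hx, if_neg hβ, if_pos hx]; rfl
      · rw [resM, if_neg hx, if_neg hx]
    rw [heq]
    exact Measurable.ite hJ measurable_const (P.measurable_coe hA)

lemma measurable_resM [IsProbabilityMeasure ν] (hJ : MeasurableSet J)
    (hsm : SmallHyp P J β ν) : Measurable (resM P J β ν) :=
  Measure.measurable_of_measurable_coe _ fun _ hA => measurable_resM_coe hJ hsm hA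

/-- The key pointwise identity `(1 - β 1_J(x)) ∫ f dQ(x,·) = (R f)(x)`. -/
lemma resM_lintegral [IsMarkovKernel P] [IsProbabilityMeasure ν] (hsm : SmallHyp P J β ν)
    (hβ1 : β ≤ 1) {f : 𝒳 → ℝ≥0∞} (hf : Measurable f) (hνf : ∫⁻ y, f y ∂ν ≠ ∞) (x : 𝒳) :
    (1 - bJ J β x) * ∫⁻ y, f y ∂(resM P J β ν x) = Rop P J β ν f x := by
  by_cases hx : x ∈ J
  · by_cases hβ : β < 1
    · have hne : (1 : ℝ≥0∞) - ENNReal.ofReal β ≠ 0 := by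
        rw [Ne, tsub_eq_zero_iff_le, not_le]
        exact ofReal_lt_one_of_lt hβ
      have hnetop : (1 : ℝ≥0∞) - ENNReal.ofReal β ≠ ∞ :=
        ne_top_of_le_ne_top one_ne_top tsub_le_self
      have hsub : ∫⁻ y, f y ∂(P x - (bJ J β x) • ν) =
          (∫⁻ y, f y ∂(P x)) - bJ J β x * ∫⁻ y, f y ∂ν := by
        haveI := bJ_smul_finite (J := J) (β := β) (ν := ν) x
        have hc : (P x - (bJ J β x) • ν) + (bJ J β x) • ν = P x :=
          Measure.sub_add_cancel_of_le (hsm x)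
        have := lintegral_add_measure f (P x - (bJ J β x) • ν) ((bJ J β x) • ν)
        rw [hc] at this
        rw [lintegral_smul_measure] at this
        exact ENNReal.eq_sub_of_add_eq (ENNReal.mul_ne_top (bJ_ne_top x) hνf) this.symm
      rw [resM, if_pos hx, if_pos hβ, lintegral_smul_measure, smul_eq_mul, hsub, bJ_mem hx, ← mul_assoc,
        ENNReal.mul_inv_cancel hne hnetop, one_mul, Rop, bJ_mem hx]
    · have hPν : P x = ν := Px_eq_nu hsm hβ1 hβ hx
      have hβe : β = 1 := le_antisymm hβ1 (not_lt.1 hβ)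
      rw [resM, if_pos hx, if_neg hβ, Rop, bJ_mem hx, hβe, ENNReal.ofReal_one, one_mul, hPν,
        tsub_self, tsub_self, zero_mul]
  · rw [resM, if_neg hx, Rop, bJ_not_mem hx, tsub_zero, one_mul, zero_mul, tsub_zero]

end ResM

end SplitDrift
namespace SplitDrift

section Chain

variable {Ω 𝒳 : Type*} [mΩ : MeasurableSpace Ω] [MeasurableSpace 𝒳]
variable {μ : Measure Ω} [IsProbabilityMeasure μ]
variable {P : Kernel 𝒳 𝒳} [IsMarkovKernel P] {J : Set 𝒳} {β : ℝ} {ν : Measure 𝒳}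
variable [IsProbabilityMeasure ν] {X : ℕ → Ω → 𝒳} {G : ℕ → Ω → Bool}

lemma condX_fun (hJ : MeasurableSet J) (hsm : SmallHyp P J β ν) (hβ1 : β ≤ 1)
    (hc : IsSplitChain μ P J β ν X G) (n : ℕ) {B : Set Ω}
    (hB : MeasurableSet[pastXG X G n] B) {f : 𝒳 → ℝ≥0∞} (hf : Measurable f) :
    ∫⁻ ω in B, f (X (n+1) ω) ∂μ =
      ∫⁻ ω in B, (if G n ω = true then ∫⁻ y, f y ∂ν
        else ∫⁻ y, f y ∂(resM P J β ν (X n ω))) ∂μ := by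
  have hBm : MeasurableSet B := pastXG_le hc.measX hc.measG n B hB
  have hκmeas : Measurable (fun ω => if G n ω = true then ν else resM P J β ν (X n ω)) := by
    refine Measure.measurable_of_measurable_coe _ (fun A hA => ?_)
    simp only [apply_ite (fun m : Measure 𝒳 => m A)]
    exact Measurable.ite (hc.measG n (measurableSet_singleton true)) measurable_const
      ((measurable_resM_coe hJ hsm hA).comp (hc.measX n))
  have h1 : (μ.restrict B).map (X (n+1)) =
      (μ.restrict B).bind (fun ω => if G n ω = true then ν else resM P J β ν (X n ω)) := by
    refine Measure.ext fun A hA => ?_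
    rw [Measure.map_apply (hc.measX (n+1)) hA, Measure.restrict_apply ((hc.measX (n+1)) hA),
      Set.inter_comm, Measure.bind_apply hA hκmeas.aemeasurable, hc.condX n A hA B hB]
    refine setLIntegral_congr_fun hBm (fun ω _ => ?_)
    by_cases hω : G n ω = true
    · rw [if_pos hω, if_pos hω]
    · rw [if_neg hω, if_neg hω, resM_eq_residual hsm hβ1 _ hA]
  calc ∫⁻ ω in B, f (X (n+1) ω) ∂μ
      = ∫⁻ y, f y ∂((μ.restrict B).map (X (n+1))) := (lintegral_map hf (hc.measX (n+1))).symm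
    _ = ∫⁻ ω in B, ∫⁻ y, f y ∂(if G n ω = true then ν else resM P J β ν (X n ω)) ∂μ := by
        rw [h1]; exact Measure.lintegral_bind hκmeas.aemeasurable hf.aemeasurable
    _ = ∫⁻ ω in B, (if G n ω = true then ∫⁻ y, f y ∂ν
          else ∫⁻ y, f y ∂(resM P J β ν (X n ω))) ∂μ := by
        refine lintegral_congr fun ω => ?_
        rw [apply_ite (fun m : Measure 𝒳 => ∫⁻ y, f y ∂m)]

lemma condG_false (hJ : MeasurableSet J) (hc : IsSplitChain μ P J β ν X G) (hβ1 : β ≤ 1)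
    (n : ℕ) {B : Set Ω} (hB : MeasurableSet[pastBeforeG X G n] B) :
    μ (B ∩ {ω | G n ω = false}) = ∫⁻ ω in B, (1 - bJ J β (X n ω)) ∂μ := by
  have hBm : MeasurableSet B := pastBeforeG_le hc.measX hc.measG n B hB
  have hT : MeasurableSet {ω | G n ω = true} := hc.measG n (measurableSet_singleton true)
  have hsplit : B ∩ {ω | G n ω = false} = B \ {ω | G n ω = true} := by
    ext ω
    simp [Bool.not_eq_true]
  have h2 := measure_inter_add_diff (μ := μ) B hT
  have h3 : μ (B \ {ω | G n ω = true}) = μ B - μ (B ∩ {ω | G n ω = true}) :=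
    ENNReal.eq_sub_of_add_eq (measure_ne_top _ _) (by rw [add_comm]; exact h2)
  have hbm : Measurable fun ω => bJ J β (X n ω) := (measurable_bJ hJ).comp (hc.measX n)
  have hble : ∀ ω, bJ J β (X n ω) ≤ 1 := fun ω => bJ_le_one hβ1 _
  have hfin : ∫⁻ ω in B, bJ J β (X n ω) ∂μ ≠ ∞ := by
    refine ne_top_of_le_ne_top (measure_ne_top μ B) ?_
    calc ∫⁻ ω in B, bJ J β (X n ω) ∂μ ≤ ∫⁻ _ in B, 1 ∂μ := lintegral_mono hble
      _ = μ B := setLIntegral_one B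
  rw [hsplit, h3, hc.condG n B hB, ← setLIntegral_one B]
  exact (lintegral_sub hbm hfin (Filter.Eventually.of_forall hble)).symm

lemma bridge (hJ : MeasurableSet J) (hsm : SmallHyp P J β ν) (hβ1 : β ≤ 1)
    (hc : IsSplitChain μ P J β ν X G) (hX0 : μ.map (X 0) = ν) :
    ∀ (n : ℕ) (f : 𝒳 → ℝ≥0∞), Measurable f → (∀ y, f y ≤ 1) →
      ∫⁻ ω in An G n, f (X n ω) ∂μ = ∫⁻ x, Rpow P J β ν n f x ∂ν := by
  intro n
  induction n with
  | zero =>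
    intro f hf _
    show ∫⁻ ω in An G 0, f (X 0 ω) ∂μ = ∫⁻ x, f x ∂ν
    rw [An_zero, Measure.restrict_univ, ← hX0, lintegral_map hf (hc.measX 0)]
  | succ n IH =>
    intro f hf hf1
    have hνf : ∫⁻ y, f y ∂ν ≠ ∞ := by
      refine ne_top_of_le_ne_top (by simp : (1:ℝ≥0∞) ≠ ∞) ?_
      calc ∫⁻ y, f y ∂ν ≤ ∫⁻ _, 1 ∂ν := lintegral_mono hf1
        _ = 1 := by simp
    set F : Set Ω := {ω | G n ω = false} with hF
    have hAm : MeasurableSet (An G n) := An_measurableSet hc.measG n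
    have hFm : MeasurableSet F := hc.measG n (measurableSet_singleton false)
    have hresmeas : Measurable fun x => ∫⁻ y, f y ∂(resM P J β ν x) :=
      (Measure.measurable_lintegral hf).comp (measurable_resM hJ hsm)
    have hB : MeasurableSet[pastXG X G n] (An G n ∩ F) :=
      (An_measurableSet_pastXG n).inter
        (measurable_G_pastXG n n le_rfl (measurableSet_singleton false))
    have e1 := condX_fun hJ hsm hβ1 hc n hB hf
    have e2 : ∫⁻ ω in An G n ∩ F, (if G n ω = true then ∫⁻ y, f y ∂ν
        else ∫⁻ y, f y ∂(resM P J β ν (X n ω))) ∂μ =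
        ∫⁻ ω in An G n ∩ F, ∫⁻ y, f y ∂(resM P J β ν (X n ω)) ∂μ := by
      refine setLIntegral_congr_fun (hAm.inter hFm) (fun ω hω => ?_)
      rw [if_neg]
      rw [hF] at hω
      simp only [Set.mem_inter_iff, Set.mem_setOf_eq] at hω
      simp [hω.2]
    have hφ : Measurable[pastBeforeG X G n]
        ((An G n).indicator (fun ω => ∫⁻ y, f y ∂(resM P J β ν (X n ω)))) :=
      Measurable.indicator (hresmeas.comp (measurable_X_pastBeforeG n n le_rfl))
        (An_measurableSet_past n)
    have hg : Measurable fun ω => (1:ℝ≥0∞) - bJ J β (X n ω) :=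
      measurable_const.sub ((measurable_bJ hJ).comp (hc.measX n))
    have e3 := lintegral_cond μ (pastBeforeG X G n) (pastBeforeG_le hc.measX hc.measG n) hg
      (fun B hB => condG_false hJ hc hβ1 n hB) hφ
    -- rewrite LHS of e3
    have e4 : ∫⁻ ω in F, (An G n).indicator (fun ω => ∫⁻ y, f y ∂(resM P J β ν (X n ω))) ω ∂μ
        = ∫⁻ ω in An G n ∩ F, ∫⁻ y, f y ∂(resM P J β ν (X n ω)) ∂μ := by
      rw [lintegral_indicator hAm, Measure.restrict_restrict hAm]
    -- rewrite RHS of e3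
    have e5 : ∫⁻ ω, (An G n).indicator (fun ω => ∫⁻ y, f y ∂(resM P J β ν (X n ω))) ω *
          ((1:ℝ≥0∞) - bJ J β (X n ω)) ∂μ
        = ∫⁻ ω in An G n, Rop P J β ν f (X n ω) ∂μ := by
      rw [← lintegral_indicator hAm]
      refine lintegral_congr fun ω => ?_
      by_cases hω : ω ∈ An G n
      · rw [Set.indicator_of_mem hω, Set.indicator_of_mem hω, mul_comm,
          resM_lintegral hsm hβ1 hf hνf]
      · rw [Set.indicator_of_notMem hω, Set.indicator_of_notMem hω, zero_mul]
    calc ∫⁻ ω in An G (n+1), f (X (n+1) ω) ∂μ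
        = ∫⁻ ω in An G n ∩ F, f (X (n+1) ω) ∂μ := by rw [An_succ]
      _ = ∫⁻ ω in An G n ∩ F, ∫⁻ y, f y ∂(resM P J β ν (X n ω)) ∂μ := by rw [e1, e2]
      _ = ∫⁻ ω in An G n, Rop P J β ν f (X n ω) ∂μ := by rw [← e5, ← e3, e4]
      _ = ∫⁻ x, Rpow P J β ν n (Rop P J β ν f) x ∂ν :=
          IH (Rop P J β ν f) (Rop_measurable hJ hf) (Rop_le_const hf1)
      _ = ∫⁻ x, Rpow P J β ν (n+1) f x ∂ν := rfl

end Chain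

end SplitDrift
namespace SplitDrift

section Drift

variable {𝒳 : Type*} [MeasurableSpace 𝒳] {P : Kernel 𝒳 𝒳} [IsMarkovKernel P]
variable {J : Set 𝒳} {β : ℝ} {ν : Measure 𝒳} [IsProbabilityMeasure ν]
variable {V : 𝒳 → ℝ} {l K : ℝ}

/-- All standing drift/minorization assumptions, bundled. -/
structure DriftCtx (P : Kernel 𝒳 𝒳) (J : Set 𝒳) (β : ℝ) (ν : Measure 𝒳)
    (V : 𝒳 → ℝ) (l K : ℝ) : Prop where
  hJ : MeasurableSet J
  hβ0 : 0 < β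
  hβ1 : β ≤ 1
  hsm : SmallHyp P J β ν
  hVmeas : Measurable V
  hV1 : ∀ x, 1 ≤ V x
  hl0 : 0 < l
  hl1 : l < 1
  hK1 : 1 ≤ K
  hdOff : ∀ x ∉ J, ∫⁻ y, ENNReal.ofReal (V y) ∂(P x) ≤ ENNReal.ofReal (l * V x)
  hdOn : ∀ x ∈ J, ∫⁻ y, ENNReal.ofReal (V y) ∂(P x) ≤ ENNReal.ofReal K

namespace DriftCtx

variable (hd : DriftCtx P J β ν V l K)
include hd

lemma VbMeas : Measurable fun x => ENNReal.ofReal (V x) :=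
  ENNReal.measurable_ofReal.comp hd.hVmeas

lemma Vb1 : ∀ x, (1 : ℝ≥0∞) ≤ ENNReal.ofReal (V x) := fun x =>
  ENNReal.one_le_ofReal.2 (hd.hV1 x)

lemma lK : l ≤ K := le_trans hd.hl1.le hd.hK1

lemma one_le_PVb (x : 𝒳) : (1 : ℝ≥0∞) ≤ ∫⁻ y, ENNReal.ofReal (V y) ∂(P x) := by
  calc (1 : ℝ≥0∞) = ∫⁻ _, 1 ∂(P x) := by simp
    _ ≤ ∫⁻ y, ENNReal.ofReal (V y) ∂(P x) := lintegral_mono hd.Vb1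

lemma lV_one (x : 𝒳) (hx : x ∉ J) : 1 ≤ l * V x :=
  ENNReal.one_le_ofReal.1 (le_trans (hd.one_le_PVb x) (hd.hdOff x hx))

lemma Rop_Vb_le (x : 𝒳) :
    Rop P J β ν (fun y => ENNReal.ofReal (V y)) x ≤
      ENNReal.ofReal l * ENNReal.ofReal (V x) +
        ENNReal.ofReal (K - l) * J.indicator (fun _ => (1:ℝ≥0∞)) x := by
  by_cases hx : x ∈ J
  · rw [Set.indicator_of_mem hx, mul_one]
    calc Rop P J β ν (fun y => ENNReal.ofReal (V y)) x
        ≤ ∫⁻ y, ENNReal.ofReal (V y) ∂(P x) := Rop_le_lint _ x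
      _ ≤ ENNReal.ofReal K := hd.hdOn x hx
      _ = ENNReal.ofReal l * 1 + ENNReal.ofReal (K - l) := by
          rw [mul_one, ← ENNReal.ofReal_add hd.hl0.le (by linarith [hd.lK])]
          norm_num
      _ ≤ ENNReal.ofReal l * ENNReal.ofReal (V x) + ENNReal.ofReal (K - l) := by
          gcongr
          exact hd.Vb1 x
  · rw [Set.indicator_of_notMem hx, mul_zero, add_zero]
    calc Rop P J β ν (fun y => ENNReal.ofReal (V y)) x
        ≤ ∫⁻ y, ENNReal.ofReal (V y) ∂(P x) := Rop_le_lint _ x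
      _ ≤ ENNReal.ofReal (l * V x) := hd.hdOff x hx
      _ = ENNReal.ofReal l * ENNReal.ofReal (V x) := ENNReal.ofReal_mul hd.hl0.le

end DriftCtx

/-- The geometric constant sequence in the iterated drift bound. -/
def Dseq (l K : ℝ) : ℕ → ℝ
  | 0 => 0
  | (j+1) => l^j * (K - l) + Dseq l K j

lemma Dseq_nonneg {l K : ℝ} (hl0 : 0 ≤ l) (hlK : l ≤ K) (j : ℕ) : 0 ≤ Dseq l K j := by
  induction j with
  | zero => simp [Dseq]
  | succ j ih =>
    have : (0:ℝ) ≤ l ^ j := pow_nonneg hl0 j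
    have : (0:ℝ) ≤ l ^ j * (K - l) := mul_nonneg ‹_› (by linarith)
    simp only [Dseq]
    linarith

/-- Iterated drift bound: `R^j f ≤ a l^j V + (a D_j + b)` whenever `f ≤ a V + b`. -/
lemma iter_bound (hd : DriftCtx P J β ν V l K)
    (hνVb : ∫⁻ y, ENNReal.ofReal (V y) ∂ν ≠ ∞)
    {f : 𝒳 → ℝ≥0∞} (hf : Measurable f) {a b : ℝ} (ha : 0 ≤ a) (hb : 0 ≤ b)
    (hfab : ∀ x, f x ≤ ENNReal.ofReal a * ENNReal.ofReal (V x) + ENNReal.ofReal b) :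
    ∀ j x, Rpow P J β ν j f x ≤
      ENNReal.ofReal (a * l^j) * ENNReal.ofReal (V x) +
        ENNReal.ofReal (a * Dseq l K j + b) := by
  intro j
  induction j with
  | zero =>
    intro x
    simpa [Rpow_zero, Dseq] using hfab x
  | succ j ih =>
    intro x
    have hMmeas : Measurable fun x => ENNReal.ofReal (a * l^j) * ENNReal.ofReal (V x) +
        ENNReal.ofReal (a * Dseq l K j + b) :=
      (measurable_const.mul hd.VbMeas).add measurable_const
    have hνM : ∫⁻ y, (ENNReal.ofReal (a * l^j) * ENNReal.ofReal (V y) +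
        ENNReal.ofReal (a * Dseq l K j + b)) ∂ν ≠ ∞ := by
      rw [lintegral_add_right _ measurable_const, lintegral_const_mul _ hd.VbMeas]
      simp only [lintegral_const, measure_univ, mul_one]
      exact ENNReal.add_ne_top.2 ⟨ENNReal.mul_ne_top ENNReal.ofReal_ne_top hνVb,
        ENNReal.ofReal_ne_top⟩
    have step1 : Rpow P J β ν (j+1) f x ≤ Rop P J β ν (fun y =>
        ENNReal.ofReal (a * l^j) * ENNReal.ofReal (V y) +
          ENNReal.ofReal (a * Dseq l K j + b)) x := by
      rw [Rpow_succ_comm]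
      exact Rop_mono hd.hsm (Rpow_measurable hd.hJ hf j) ih hνM x
    have step2 : Rop P J β ν (fun y =>
        ENNReal.ofReal (a * l^j) * ENNReal.ofReal (V y) +
          ENNReal.ofReal (a * Dseq l K j + b)) x =
        ENNReal.ofReal (a * l^j) * Rop P J β ν (fun y => ENNReal.ofReal (V y)) x +
          Rop P J β ν (fun _ => ENNReal.ofReal (a * Dseq l K j + b)) x := by
      rw [Rop_add hd.hsm (hd.VbMeas.const_mul _)
        (by rw [lintegral_const_mul _ hd.VbMeas]
            exact ENNReal.mul_ne_top ENNReal.ofReal_ne_top hνVb)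
        (by simp)]
      rw [Rop_smul ENNReal.ofReal_ne_top hd.VbMeas]
    have step3 : ENNReal.ofReal (a * l^j) * Rop P J β ν (fun y => ENNReal.ofReal (V y)) x +
          Rop P J β ν (fun _ => ENNReal.ofReal (a * Dseq l K j + b)) x ≤
        ENNReal.ofReal (a * l^j) * (ENNReal.ofReal l * ENNReal.ofReal (V x) +
          ENNReal.ofReal (K - l)) + ENNReal.ofReal (a * Dseq l K j + b) := by
      have hind : J.indicator (fun _ => (1:ℝ≥0∞)) x ≤ 1 := by
        by_cases hx : x ∈ J <;> simp [hx]
      gcongr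
      · calc Rop P J β ν (fun y => ENNReal.ofReal (V y)) x
            ≤ ENNReal.ofReal l * ENNReal.ofReal (V x) +
              ENNReal.ofReal (K - l) * J.indicator (fun _ => (1:ℝ≥0∞)) x := hd.Rop_Vb_le x
          _ ≤ ENNReal.ofReal l * ENNReal.ofReal (V x) + ENNReal.ofReal (K - l) := by
              gcongr
              calc ENNReal.ofReal (K - l) * J.indicator (fun _ => (1:ℝ≥0∞)) x
                  ≤ ENNReal.ofReal (K - l) * 1 := by gcongr
                _ = ENNReal.ofReal (K - l) := mul_one _
      · exact Rop_le_const (fun _ => le_rfl) x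
    have step4 : ENNReal.ofReal (a * l^j) * (ENNReal.ofReal l * ENNReal.ofReal (V x) +
          ENNReal.ofReal (K - l)) + ENNReal.ofReal (a * Dseq l K j + b) =
        ENNReal.ofReal (a * l^(j+1)) * ENNReal.ofReal (V x) +
          ENNReal.ofReal (a * Dseq l K (j+1) + b) := by
      have h1 : (0:ℝ) ≤ a * l^j := mul_nonneg ha (pow_nonneg hd.hl0.le j)
      have h2 : (0:ℝ) ≤ l^j * (K-l) := mul_nonneg (pow_nonneg hd.hl0.le j)
        (by linarith [hd.lK])
      have hD : (0:ℝ) ≤ Dseq l K j := Dseq_nonneg hd.hl0.le hd.lK j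
      rw [mul_add, ← mul_assoc, ← ENNReal.ofReal_mul h1, ← ENNReal.ofReal_mul h1, add_assoc,
        ← ENNReal.ofReal_add (by nlinarith) (by nlinarith),
        show a*l^j*l = a*l^(j+1) by ring,
        show a*l^j*(K-l) + (a*Dseq l K j + b) = a * Dseq l K (j+1) + b by
          simp only [Dseq]; ring]
    exact le_trans step1 (le_trans (le_of_eq step2) (le_trans step3 (le_of_eq step4)))
  
end Drift

end SplitDrift
namespace SplitDrift

section Drift2

variable {𝒳 : Type*} [MeasurableSpace 𝒳] {P : Kernel 𝒳 𝒳} [IsMarkovKernel P]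
variable {J : Set 𝒳} {β : ℝ} {ν : Measure 𝒳} [IsProbabilityMeasure ν]
variable {V : 𝒳 → ℝ} {l K : ℝ}

/-- ν-integrability of all iterates, from the pointwise iterated drift bound. -/
lemma iter_fin (hd : DriftCtx P J β ν V l K)
    (hνVb : ∫⁻ y, ENNReal.ofReal (V y) ∂ν ≠ ∞)
    {f : 𝒳 → ℝ≥0∞} (hf : Measurable f) {a b : ℝ} (ha : 0 ≤ a) (hb : 0 ≤ b)
    (hfab : ∀ x, f x ≤ ENNReal.ofReal a * ENNReal.ofReal (V x) + ENNReal.ofReal b) (j : ℕ) :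
    ∫⁻ y, Rpow P J β ν j f y ∂ν ≠ ∞ := by
  have hb := iter_bound hd hνVb hf ha hb hfab j
  refine ne_top_of_le_ne_top ?_ (lintegral_mono hb)
  rw [lintegral_add_right _ measurable_const, lintegral_const_mul _ hd.VbMeas]
  simp only [lintegral_const, measure_univ, mul_one]
  exact ENNReal.add_ne_top.2 ⟨ENNReal.mul_ne_top ENNReal.ofReal_ne_top hνVb,
    ENNReal.ofReal_ne_top⟩

/-- π-integrability analogue. -/
lemma iter_fin_pi {π : Measure 𝒳} [IsProbabilityMeasure π] (hd : DriftCtx P J β ν V l K)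
    (hπVb : ∫⁻ y, ENNReal.ofReal (V y) ∂π ≠ ∞)
    (hνVb : ∫⁻ y, ENNReal.ofReal (V y) ∂ν ≠ ∞)
    {f : 𝒳 → ℝ≥0∞} (hf : Measurable f) {a b : ℝ} (ha : 0 ≤ a) (hb : 0 ≤ b)
    (hfab : ∀ x, f x ≤ ENNReal.ofReal a * ENNReal.ofReal (V x) + ENNReal.ofReal b) (j : ℕ) :
    ∫⁻ y, Rpow P J β ν j f y ∂π ≠ ∞ := by
  have hb := iter_bound hd hνVb hf ha hb hfab j
  refine ne_top_of_le_ne_top ?_ (lintegral_mono hb)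
  rw [lintegral_add_right _ measurable_const, lintegral_const_mul _ hd.VbMeas]
  simp only [lintegral_const, measure_univ, mul_one]
  exact ENNReal.add_ne_top.2 ⟨ENNReal.mul_ne_top ENNReal.ofReal_ne_top hπVb,
    ENNReal.ofReal_ne_top⟩

/-- The drift comparison function `g = α (V-1) + γ`. -/
noncomputable def gE (V : 𝒳 → ℝ) (l K β : ℝ) : 𝒳 → ℝ≥0∞ := fun x =>
  ENNReal.ofReal (l/(1-l)) * (ENNReal.ofReal (V x) - 1) +
    ENNReal.ofReal ((K-l)/(β*(1-l)) - 1)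

lemma gE_meas (hd : DriftCtx P J β ν V l K) : Measurable (gE V l K β) :=
  (measurable_const.mul (hd.VbMeas.sub measurable_const)).add measurable_const

lemma gE_le (x : 𝒳) : gE V l K β x ≤
    ENNReal.ofReal (l/(1-l)) * ENNReal.ofReal (V x) +
      ENNReal.ofReal ((K-l)/(β*(1-l)) - 1) := by
  unfold gE
  gcongr
  exact tsub_le_self

lemma gamma_nonneg (hd : DriftCtx P J β ν V l K) : 0 ≤ (K-l)/(β*(1-l)) - 1 := by
  have h1 : 0 < β * (1-l) := mul_pos hd.hβ0 (by linarith [hd.hl1])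
  rw [sub_nonneg, le_div_iff₀ h1]
  nlinarith [hd.hK1, hd.hβ1, hd.hl1, hd.hβ0]

lemma alpha_nonneg (hd : DriftCtx P J β ν V l K) : 0 ≤ l/(1-l) :=
  div_nonneg hd.hl0.le (by linarith [hd.hl1])

/-- `∫ (1 + g) dm = (1+γ) + α (∫V dm - 1)` for a probability measure `m`. -/
lemma lint_one_add_gE (hd : DriftCtx P J β ν V l K) (m : Measure 𝒳) [IsProbabilityMeasure m] :
    ∫⁻ y, (1 + gE V l K β y) ∂m =
      (1 + ENNReal.ofReal ((K-l)/(β*(1-l)) - 1)) +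
        ENNReal.ofReal (l/(1-l)) * ((∫⁻ y, ENNReal.ofReal (V y) ∂m) - 1) := by
  have hpt : ∀ y, 1 + gE V l K β y =
      (1 + ENNReal.ofReal ((K-l)/(β*(1-l)) - 1)) +
        ENNReal.ofReal (l/(1-l)) * (ENNReal.ofReal (V y) - 1) := by
    intro y
    unfold gE
    ring
  rw [lintegral_congr hpt, lintegral_add_left measurable_const,
    lintegral_const_mul _ (hd.VbMeas.sub_const _), lintegral_const]
  rw [measure_univ, mul_one,
    lintegral_sub measurable_const (by simp) (Filter.Eventually.of_forall hd.Vb1)]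
  simp

/-- forward ofReal decomposition -/
lemma ofReal_decomp {γ α t : ℝ} (hγ0 : 0 ≤ γ) (hα0 : 0 ≤ α) (ht : 1 ≤ t) :
    ENNReal.ofReal (1 + γ + α * (t - 1)) =
      (1 + ENNReal.ofReal γ) + ENNReal.ofReal α * (ENNReal.ofReal t - 1) := by
  rw [show 1 + γ + α * (t - 1) = (1 + γ) + α * (t - 1) by ring,
    ENNReal.ofReal_add (by linarith) (mul_nonneg hα0 (by linarith)),
    ENNReal.ofReal_add zero_le_one hγ0, ENNReal.ofReal_one,
    ENNReal.ofReal_mul hα0, ENNReal.ofReal_sub t zero_le_one, ENNReal.ofReal_one]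

/-- The key superharmonicity `R(1+g) ≤ g`. -/
lemma key_superharmonic (hd : DriftCtx P J β ν V l K) (x : 𝒳) :
    Rop P J β ν (fun y => 1 + gE V l K β y) x ≤ gE V l K β x := by
  have hα0 : 0 ≤ l/(1-l) := alpha_nonneg hd
  have hγ0 : 0 ≤ (K-l)/(β*(1-l)) - 1 := gamma_nonneg hd
  have h1l : (0:ℝ) < 1 - l := by linarith [hd.hl1]
  have hαl : (l/(1-l)) * (1 - l) = l := by field_simp
  have hgEx : ENNReal.ofReal ((l/(1-l)) * (V x - 1) + ((K-l)/(β*(1-l)) - 1)) ≤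
      gE V l K β x := by
    unfold gE
    rw [ENNReal.ofReal_add (mul_nonneg hα0 (by nlinarith [hd.hV1 x])) hγ0,
      ENNReal.ofReal_mul hα0, ENNReal.ofReal_sub (V x) zero_le_one, ENNReal.ofReal_one]
  by_cases hx : x ∈ J
  · -- on J
    have hnum : Rop P J β ν (fun y => 1 + gE V l K β y) x ≤
        ENNReal.ofReal (1 + ((K-l)/(β*(1-l)) - 1) + (l/(1-l)) * (K - 1)) -
          ENNReal.ofReal (β * (1 + ((K-l)/(β*(1-l)) - 1))) := by
      unfold Rop
      rw [bJ_mem hx]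
      refine tsub_le_tsub ?_ ?_
      · rw [lint_one_add_gE hd (P x), ofReal_decomp hγ0 hα0 hd.hK1]
        gcongr
        exact hd.hdOn x hx
      · rw [lint_one_add_gE hd ν,
          ENNReal.ofReal_mul hd.hβ0.le, ENNReal.ofReal_add zero_le_one hγ0,
          ENNReal.ofReal_one]
        exact mul_le_mul_right le_self_add _
    refine le_trans hnum (le_trans ?_ hgEx)
    rw [← ENNReal.ofReal_sub _ (mul_nonneg hd.hβ0.le (by linarith))]
    refine ENNReal.ofReal_le_ofReal ?_
    have hβγ : β * (1 + ((K-l)/(β*(1-l)) - 1)) = (K - l)/(1-l) := by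
      have hβ0 : β ≠ 0 := ne_of_gt hd.hβ0
      field_simp
      ring
    rw [hβγ]
    have h2 : 1 + (l/(1-l)) * (K-1) ≤ (K-l)/(1-l) := by
      rw [le_div_iff₀ h1l]
      nlinarith [hd.hK1, hαl]
    nlinarith [hd.hV1 x, hα0]
  · -- off J
    have hV : 1 ≤ l * V x := hd.lV_one x hx
    have hend : Rop P J β ν (fun y => 1 + gE V l K β y) x =
        ∫⁻ y, (1 + gE V l K β y) ∂(P x) := by
      unfold Rop
      rw [bJ_not_mem hx, zero_mul, tsub_zero]
    rw [hend, lint_one_add_gE hd (P x)]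
    calc (1 + ENNReal.ofReal ((K-l)/(β*(1-l)) - 1)) + ENNReal.ofReal (l/(1-l)) *
          ((∫⁻ y, ENNReal.ofReal (V y) ∂(P x)) - 1)
        ≤ (1 + ENNReal.ofReal ((K-l)/(β*(1-l)) - 1)) + ENNReal.ofReal (l/(1-l)) *
          (ENNReal.ofReal (l * V x) - 1) := by
          gcongr
          exact hd.hdOff x hx
      _ = ENNReal.ofReal (1 + ((K-l)/(β*(1-l)) - 1) + (l/(1-l)) * (l * V x - 1)) :=
          (ofReal_decomp hγ0 hα0 hV).symm
      _ ≤ ENNReal.ofReal ((l/(1-l)) * (V x - 1) + ((K-l)/(β*(1-l)) - 1)) := by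
          refine ENNReal.ofReal_le_ofReal ?_
          nlinarith [hd.hV1 x]
      _ ≤ gE V l K β x := hgEx

end Drift2

end SplitDrift
namespace SplitDrift

section Tel

variable {𝒳 : Type*} [MeasurableSpace 𝒳] {P : Kernel 𝒳 𝒳} [IsMarkovKernel P]
variable {J : Set 𝒳} {β : ℝ} {ν : Measure 𝒳} [IsProbabilityMeasure ν]
variable {π : Measure 𝒳} [IsProbabilityMeasure π]

lemma lint_bJ (hJ : MeasurableSet J) : ∫⁻ x, bJ J β x ∂π = ENNReal.ofReal β * π J := by
  unfold bJ
  rw [lintegral_const_mul _ (measurable_const.indicator hJ), lintegral_indicator hJ]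
  simp

/-- One invariance step: `π(h) = π(R h) + β π(J) ν(h)`. -/
lemma pi_step (hJ : MeasurableSet J) (hsm : SmallHyp P J β ν)
    (hinv : Kernel.Invariant P π) {h : 𝒳 → ℝ≥0∞} (hh : Measurable h) :
    ∫⁻ x, h x ∂π = ∫⁻ x, Rop P J β ν h x ∂π +
      (ENNReal.ofReal β * π J) * ∫⁻ y, h y ∂ν := by
  have hinv' : π.bind ⇑P = π := hinv
  have h1 : ∫⁻ x, h x ∂π = ∫⁻ x, ∫⁻ y, h y ∂(P x) ∂π := by
    conv_lhs => rw [← hinv']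
    exact Measure.lintegral_bind P.measurable.aemeasurable hh.aemeasurable
  have h2 : ∀ x, ∫⁻ y, h y ∂(P x) = Rop P J β ν h x + bJ J β x * ∫⁻ y, h y ∂ν :=
    fun x => (tsub_add_cancel_of_le (hsm.lint x h)).symm
  rw [h1, lintegral_congr h2,
    lintegral_add_right _ ((measurable_bJ hJ).mul_const _),
    lintegral_mul_const _ (measurable_bJ hJ), lint_bJ hJ]

/-- Telescoped invariance identity. -/
lemma tel (hJ : MeasurableSet J) (hsm : SmallHyp P J β ν) (hinv : Kernel.Invariant P π)
    {f : 𝒳 → ℝ≥0∞} (hf : Measurable f) (N : ℕ) :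
    ∫⁻ x, f x ∂π = ∫⁻ x, Rpow P J β ν N f x ∂π +
      (ENNReal.ofReal β * π J) * ∑ k ∈ Finset.range N, ∫⁻ y, Rpow P J β ν k f y ∂ν := by
  induction N with
  | zero => simp [Rpow_zero]
  | succ N ih =>
    rw [ih, Finset.sum_range_succ,
      pi_step hJ hsm hinv (Rpow_measurable hJ hf N), ← Rpow_succ_comm]
    ring

end Tel

section Wseq

variable {𝒳 : Type*} [MeasurableSpace 𝒳] {P : Kernel 𝒳 𝒳} [IsMarkovKernel P]
variable {J : Set 𝒳} {β : ℝ} {ν : Measure 𝒳} [IsProbabilityMeasure ν]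
variable {V : 𝒳 → ℝ} {l K : ℝ}

/-- Partial sums `w_M = ∑_{m<M} R^{m+1} 1`. -/
noncomputable def wseq (P : Kernel 𝒳 𝒳) (J : Set 𝒳) (β : ℝ) (ν : Measure 𝒳) (M : ℕ) :
    𝒳 → ℝ≥0∞ := fun x =>
  ∑ m ∈ Finset.range M, Rpow P J β ν (m+1) (fun _ => (1:ℝ≥0∞)) x

lemma wseq_meas (hJ : MeasurableSet J) (M : ℕ) : Measurable (wseq P J β ν M) :=
  Finset.measurable_sum _ fun m _ => Rpow_measurable hJ measurable_const (m+1)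

lemma Rpow_one_le_one (n : ℕ) (x : 𝒳) : Rpow P J β ν n (fun _ => (1:ℝ≥0∞)) x ≤ 1 :=
  Rpow_le_const (fun _ => le_rfl) n x

lemma wseq_le (M : ℕ) (x : 𝒳) : wseq P J β ν M x ≤ M := by
  calc wseq P J β ν M x ≤ ∑ _m ∈ Finset.range M, (1:ℝ≥0∞) :=
        Finset.sum_le_sum fun m _ => Rpow_one_le_one (m+1) x
    _ = M := by simp

lemma wseq_nu_fin (M : ℕ) : ∫⁻ y, wseq P J β ν M y ∂ν ≠ ∞ := by
  refine ne_top_of_le_ne_top (by simp : ((M:ℝ≥0∞)) ≠ ∞) ?_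
  calc ∫⁻ y, wseq P J β ν M y ∂ν ≤ ∫⁻ _, (M:ℝ≥0∞) ∂ν := lintegral_mono (wseq_le M)
    _ = M := by simp

/-- Finite additivity of `Rop` over the `wseq` sums. -/
lemma Rop_wseq (hsm : SmallHyp P J β ν) (hJ : MeasurableSet J) (M : ℕ) :
    Rop P J β ν (fun x => 1 + wseq P J β ν M x) = wseq P J β ν (M+1) := by
  induction M with
  | zero =>
    have h1 : (fun x => (1:ℝ≥0∞) + wseq P J β ν 0 x) = fun _ => (1:ℝ≥0∞) := by
      funext y; simp [wseq]
    rw [h1, show wseq P J β ν 1 = Rpow P J β ν 1 (fun _ => (1:ℝ≥0∞)) by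
      funext y; simp [wseq], Rpow_succ_comm, Rpow_zero]
  | succ M ih =>
    have hm : Measurable (fun x => 1 + wseq P J β ν M x) :=
      measurable_const.add (wseq_meas hJ M)
    have hν1 : ∫⁻ y, (fun x => 1 + wseq P J β ν M x) y ∂ν ≠ ∞ := by
      rw [lintegral_add_left measurable_const]
      simp only [lintegral_const, measure_univ, mul_one]
      exact ENNReal.add_ne_top.2 ⟨one_ne_top, wseq_nu_fin M⟩
    have hdec : (fun x => (1:ℝ≥0∞) + wseq P J β ν (M+1) x) =
        fun x => (1 + wseq P J β ν M x) + Rpow P J β ν (M+1) (fun _ => (1:ℝ≥0∞)) x := by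
      funext x
      simp only [wseq, Finset.sum_range_succ]
      ring
    rw [hdec, Rop_add hsm hm hν1
      (ne_top_of_le_ne_top one_ne_top (by
        calc ∫⁻ y, Rpow P J β ν (M+1) (fun _ => (1:ℝ≥0∞)) y ∂ν ≤ ∫⁻ _, 1 ∂ν :=
              lintegral_mono (Rpow_one_le_one (M+1))
          _ = 1 := by simp)), ih]
    funext x
    have : Rop P J β ν (Rpow P J β ν (M+1) (fun _ => (1:ℝ≥0∞))) x =
        Rpow P J β ν (M+2) (fun _ => (1:ℝ≥0∞)) x := by
      rw [← Rpow_succ_comm]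
    rw [this]
    simp only [wseq, Finset.sum_range_succ]

lemma gE_nu_fin (hd : DriftCtx P J β ν V l K)
    (hνVb : ∫⁻ y, ENNReal.ofReal (V y) ∂ν ≠ ∞) :
    ∫⁻ y, gE V l K β y ∂ν ≠ ∞ := by
  refine ne_top_of_le_ne_top ?_ (lintegral_mono (gE_le (V := V) (l := l) (K := K) (β := β)))
  rw [lintegral_add_right _ measurable_const, lintegral_const_mul _ hd.VbMeas]
  simp only [lintegral_const, measure_univ, mul_one]
  exact ENNReal.add_ne_top.2 ⟨ENNReal.mul_ne_top ENNReal.ofReal_ne_top hνVb,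
    ENNReal.ofReal_ne_top⟩

lemma gE_iter_fin (hd : DriftCtx P J β ν V l K)
    (hνVb : ∫⁻ y, ENNReal.ofReal (V y) ∂ν ≠ ∞) (j : ℕ) :
    ∫⁻ y, Rpow P J β ν j (gE V l K β) y ∂ν ≠ ∞ :=
  iter_fin hd hνVb (gE_meas hd) (alpha_nonneg hd) (gamma_nonneg hd)
    (fun x => gE_le x) j

/-- `w_M ≤ g` for every `M`. -/
lemma wseq_le_gE (hd : DriftCtx P J β ν V l K)
    (hνVb : ∫⁻ y, ENNReal.ofReal (V y) ∂ν ≠ ∞) (M : ℕ) (x : 𝒳) :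
    wseq P J β ν M x ≤ gE V l K β x := by
  induction M generalizing x with
  | zero => simp [wseq]
  | succ M ih =>
    rw [← Rop_wseq hd.hsm hd.hJ M]
    have hν1g : ∫⁻ y, (1 + gE V l K β y) ∂ν ≠ ∞ := by
      rw [lintegral_add_left measurable_const]
      simp only [lintegral_const, measure_univ, mul_one]
      exact ENNReal.add_ne_top.2 ⟨one_ne_top, gE_nu_fin hd hνVb⟩
    refine le_trans (Rop_mono hd.hsm (measurable_const.add (wseq_meas hd.hJ M))
      (fun y => add_le_add_right (ih y) 1) hν1g x) ?_
    exact key_superharmonic hd x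

end Wseq

end SplitDrift
namespace SplitDrift

section AN

open Filter

variable {𝒳 : Type*} [MeasurableSpace 𝒳] {P : Kernel 𝒳 𝒳} [IsMarkovKernel P]
variable {J : Set 𝒳} {β : ℝ} {ν : Measure 𝒳} [IsProbabilityMeasure ν]
variable {V : 𝒳 → ℝ} {l K : ℝ}
variable {π : Measure 𝒳} [IsProbabilityMeasure π]

lemma fin_of_le_one {f : 𝒳 → ℝ≥0∞} (hf1 : ∀ x, f x ≤ 1) (m : Measure 𝒳)
    [IsProbabilityMeasure m] (j : ℕ) : ∫⁻ y, Rpow P J β ν j f y ∂m ≠ ∞ := by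
  refine ne_top_of_le_ne_top one_ne_top ?_
  calc ∫⁻ y, Rpow P J β ν j f y ∂m ≤ ∫⁻ _, 1 ∂m :=
        lintegral_mono (Rpow_le_const hf1 j)
    _ = 1 := by simp

lemma Vb_fab (hd : DriftCtx P J β ν V l K) :
    ∀ x, ENNReal.ofReal (V x) ≤ ENNReal.ofReal (1:ℝ) * ENNReal.ofReal (V x) +
      ENNReal.ofReal (0:ℝ) := by
  intro x
  simp

/-- The crucial vanishing: `π(Rⁿ 1)` becomes arbitrarily small. -/
lemma aN_small (hd : DriftCtx P J β ν V l K) (hinv : Kernel.Invariant P π)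
    (hπVb : ∫⁻ y, ENNReal.ofReal (V y) ∂π ≠ ∞)
    (hνVb : ∫⁻ y, ENNReal.ofReal (V y) ∂ν ≠ ∞) :
    ∀ δ : ℝ, 0 < δ → ∃ N, ∫⁻ x, Rpow P J β ν N (fun _ => (1:ℝ≥0∞)) x ∂π <
      ENNReal.ofReal δ := by
  have hJ := hd.hJ
  set ind : 𝒳 → ℝ≥0∞ := J.indicator (fun _ => (1:ℝ≥0∞)) with hind
  have hindmeas : Measurable ind := measurable_const.indicator hJ
  have hind1 : ∀ x, ind x ≤ 1 := fun x => by
    by_cases hx : x ∈ J <;> simp [hind, hx]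
  set aN : ℕ → ℝ≥0∞ := fun N => ∫⁻ x, Rpow P J β ν N (fun _ => (1:ℝ≥0∞)) x ∂π with haN
  set jj : ℕ → ℝ≥0∞ := fun N => ∫⁻ x, Rpow P J β ν N ind x ∂π with hjj
  set bb : ℕ → ℝ≥0∞ := fun N => ∫⁻ x, Rpow P J β ν N (fun y => ENNReal.ofReal (V y)) x ∂π
    with hbb
  -- basic bounds
  have haN1 : ∀ N, aN N ≤ 1 := fun N => by
    rw [haN]
    calc ∫⁻ x, Rpow P J β ν N (fun _ => (1:ℝ≥0∞)) x ∂π ≤ ∫⁻ _, 1 ∂π :=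
          lintegral_mono (Rpow_le_const (fun _ => le_rfl) N)
      _ = 1 := by simp
  have hjj1 : ∀ N, jj N ≤ 1 := fun N => by
    rw [hjj]
    calc ∫⁻ x, Rpow P J β ν N ind x ∂π ≤ ∫⁻ _, 1 ∂π :=
          lintegral_mono (Rpow_le_const hind1 N)
      _ = 1 := by simp
  have hbbfin0 : bb 0 ≠ ∞ := by rw [hbb]; simpa [Rpow_zero] using hπVb
  -- decomposition identity  aN N = aN (N+1) + β jj N
  have hid : ∀ N, aN N = aN (N+1) + ENNReal.ofReal β * jj N := by
    intro N
    have hdecomp : (fun _ : 𝒳 => (1:ℝ≥0∞)) =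
        fun x => (1 - bJ J β x) + bJ J β x :=
      funext fun x => (tsub_add_cancel_of_le (bJ_le_one hd.hβ1 x)).symm
    have h1m : Measurable fun x => (1:ℝ≥0∞) - bJ J β x :=
      measurable_const.sub (measurable_bJ hJ)
    have h1le : ∀ x, (1:ℝ≥0∞) - bJ J β x ≤ 1 := fun x => tsub_le_self
    have hRone : (fun x => (1:ℝ≥0∞) - bJ J β x) = Rop P J β ν (fun _ => (1:ℝ≥0∞)) :=
      (Rop_one).symm
    have hsplit : Rpow P J β ν N (fun x => (1 - bJ J β x) + bJ J β x) =
        fun x => Rpow P J β ν N (fun x => 1 - bJ J β x) x + Rpow P J β ν N (bJ J β) x := by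
      refine Rpow_add hd.hsm hJ h1m (measurable_bJ hJ) ?_ ?_ N
      · intro j
        refine ne_top_of_le_ne_top one_ne_top ?_
        calc ∫⁻ y, Rpow P J β ν j (fun x => 1 - bJ J β x) y ∂ν ≤ ∫⁻ _, 1 ∂ν :=
              lintegral_mono (Rpow_le_const h1le j)
          _ = 1 := by simp
      · intro j
        refine ne_top_of_le_ne_top one_ne_top ?_
        calc ∫⁻ y, Rpow P J β ν j (bJ J β) y ∂ν ≤ ∫⁻ _, 1 ∂ν :=
              lintegral_mono (Rpow_le_const (bJ_le_one hd.hβ1) j)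
          _ = 1 := by simp
    have hbJsmul : Rpow P J β ν N (bJ J β) =
        fun x => ENNReal.ofReal β * Rpow P J β ν N ind x := by
      have : bJ J β = fun x => ENNReal.ofReal β * ind x := rfl
      rw [this]
      exact Rpow_smul hJ ENNReal.ofReal_ne_top hindmeas N
    calc aN N = ∫⁻ x, Rpow P J β ν N (fun x => (1 - bJ J β x) + bJ J β x) x ∂π := by
          rw [haN]
          congr 1
          rw [← hdecomp]
      _ = ∫⁻ x, (Rpow P J β ν N (fun x => 1 - bJ J β x) x + Rpow P J β ν N (bJ J β) x) ∂π := by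
          rw [hsplit]
      _ = ∫⁻ x, Rpow P J β ν N (fun x => 1 - bJ J β x) x ∂π +
            ∫⁻ x, Rpow P J β ν N (bJ J β) x ∂π :=
          lintegral_add_left (Rpow_measurable hJ h1m N) _
      _ = aN (N+1) + ENNReal.ofReal β * jj N := by
          congr 1
          · rw [haN]
            congr 1
            rw [hRone]
            rfl
          · rw [hbJsmul, lintegral_const_mul _ (Rpow_measurable hJ hindmeas N), hjj]
  have haN0 : aN 0 = 1 := by simp [haN, Rpow_zero]
  -- telescoping for jj
  have htel : ∀ M, aN 0 = aN M + ∑ k ∈ Finset.range M, ENNReal.ofReal β * jj k := by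
    intro M
    induction M with
    | zero => simp
    | succ M ih =>
      rw [ih, Finset.sum_range_succ, hid M]
      ring
  have hsum_le : ∑' k, ENNReal.ofReal β * jj k ≤ 1 := by
    rw [ENNReal.tsum_eq_iSup_nat]
    refine iSup_le fun M => ?_
    have := htel M
    rw [haN0] at this
    calc ∑ k ∈ Finset.range M, ENNReal.ofReal β * jj k ≤
          aN M + ∑ k ∈ Finset.range M, ENNReal.ofReal β * jj k := le_add_self
      _ = 1 := this.symm
  have hβjj0 : Tendsto (fun k => ENNReal.ofReal β * jj k) atTop (nhds 0) :=
    ENNReal.tendsto_atTop_zero_of_tsum_ne_top (ne_top_of_le_ne_top one_ne_top hsum_le)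
  have hβne : ENNReal.ofReal β ≠ 0 := by
    simp [ENNReal.ofReal_eq_zero, not_le, hd.hβ0]
  have hjj0 : Tendsto jj atTop (nhds 0) := by
    have h2 := ENNReal.Tendsto.const_mul (a := (ENNReal.ofReal β)⁻¹) hβjj0
      (Or.inr (by simp [hβne]))
    rw [mul_zero] at h2
    have h3 : (fun k => (ENNReal.ofReal β)⁻¹ * (ENNReal.ofReal β * jj k)) = jj := by
      funext k
      rw [← mul_assoc, ENNReal.inv_mul_cancel hβne ENNReal.ofReal_ne_top, one_mul]
    rwa [h3] at h2
  -- bb recursion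
  have hbbrec : ∀ N, bb (N+1) ≤ ENNReal.ofReal l * bb N + ENNReal.ofReal (K-l) * jj N := by
    intro N
    have hfun_fab : ∀ x, (fun x => ENNReal.ofReal l * ENNReal.ofReal (V x) +
        ENNReal.ofReal (K-l) * ind x) x ≤
        ENNReal.ofReal l * ENNReal.ofReal (V x) + ENNReal.ofReal (K-l) := by
      intro x
      refine add_le_add le_rfl ?_
      calc ENNReal.ofReal (K-l) * ind x ≤ ENNReal.ofReal (K-l) * 1 :=
            mul_le_mul_right (hind1 x) _
        _ = ENNReal.ofReal (K-l) := mul_one _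
    have hfunmeas : Measurable fun x => ENNReal.ofReal l * ENNReal.ofReal (V x) +
        ENNReal.ofReal (K-l) * ind x :=
      (measurable_const.mul hd.VbMeas).add (measurable_const.mul hindmeas)
    have hfun_fab' : ∀ x, (fun x => ENNReal.ofReal l * ENNReal.ofReal (V x) +
        ENNReal.ofReal (K-l) * ind x) x ≤
        ENNReal.ofReal l * ENNReal.ofReal (V x) + ENNReal.ofReal (K-l) := hfun_fab
    have hfinh : ∀ j, ∫⁻ y, Rpow P J β ν j (fun x => ENNReal.ofReal l * ENNReal.ofReal (V x) +
        ENNReal.ofReal (K-l) * ind x) y ∂ν ≠ ∞ := by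
      intro j
      exact iter_fin hd hνVb hfunmeas hd.hl0.le (by linarith [hd.lK]) hfun_fab j
    have hstep1 : bb (N+1) ≤ ∫⁻ x, Rpow P J β ν N (fun x =>
        ENNReal.ofReal l * ENNReal.ofReal (V x) + ENNReal.ofReal (K-l) * ind x) x ∂π := by
      rw [hbb]
      refine lintegral_mono (Rpow_mono hd.hsm hJ
        (Rop_measurable hJ hd.VbMeas) hfunmeas hd.Rop_Vb_le hfinh N)
    have hfinlv : ∀ j, ∫⁻ y, Rpow P J β ν j (fun x =>
        ENNReal.ofReal l * ENNReal.ofReal (V x)) y ∂ν ≠ ∞ := by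
      intro j
      rw [Rpow_smul hJ ENNReal.ofReal_ne_top hd.VbMeas j,
        lintegral_const_mul _ (Rpow_measurable hJ hd.VbMeas j)]
      exact ENNReal.mul_ne_top ENNReal.ofReal_ne_top
        (iter_fin hd hνVb hd.VbMeas zero_le_one zero_le_one
          (fun x => by simpa using (Vb_fab hd x)) j)
    have hfinkl : ∀ j, ∫⁻ y, Rpow P J β ν j (fun x =>
        ENNReal.ofReal (K-l) * ind x) y ∂ν ≠ ∞ := by
      intro j
      refine ne_top_of_le_ne_top (ENNReal.ofReal_ne_top (r := K - l)) ?_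
      calc ∫⁻ y, Rpow P J β ν j (fun x => ENNReal.ofReal (K-l) * ind x) y ∂ν
          ≤ ∫⁻ _, ENNReal.ofReal (K-l) ∂ν := by
            refine lintegral_mono (Rpow_le_const (fun x => ?_) j)
            calc ENNReal.ofReal (K-l) * ind x ≤ ENNReal.ofReal (K-l) * 1 := by
                  gcongr
                  exact hind1 x
              _ = _ := mul_one _
        _ = ENNReal.ofReal (K-l) := by simp
    have hstep2 : Rpow P J β ν N (fun x =>
        ENNReal.ofReal l * ENNReal.ofReal (V x) + ENNReal.ofReal (K-l) * ind x) =
        fun x => ENNReal.ofReal l * Rpow P J β ν N (fun y => ENNReal.ofReal (V y)) x +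
          ENNReal.ofReal (K-l) * Rpow P J β ν N ind x := by
      rw [Rpow_add hd.hsm hJ (hd.VbMeas.const_mul _)
        (hindmeas.const_mul _) hfinlv hfinkl N,
        Rpow_smul hJ ENNReal.ofReal_ne_top hd.VbMeas N,
        Rpow_smul hJ ENNReal.ofReal_ne_top hindmeas N]
    calc bb (N+1) ≤ ∫⁻ x, Rpow P J β ν N (fun x =>
          ENNReal.ofReal l * ENNReal.ofReal (V x) + ENNReal.ofReal (K-l) * ind x) x ∂π :=
          hstep1
      _ = ∫⁻ x, (ENNReal.ofReal l * Rpow P J β ν N (fun y => ENNReal.ofReal (V y)) x +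
          ENNReal.ofReal (K-l) * Rpow P J β ν N ind x) ∂π := by rw [hstep2]
      _ = ENNReal.ofReal l * bb N + ENNReal.ofReal (K-l) * jj N := by
          rw [lintegral_add_left ((Rpow_measurable hJ hd.VbMeas N).const_mul _) _,
            lintegral_const_mul _ (Rpow_measurable hJ hd.VbMeas N),
            lintegral_const_mul _ (Rpow_measurable hJ hindmeas N)]
    -- done
  have hbbfin : ∀ N, bb N ≠ ∞ := by
    intro N
    induction N with
    | zero => exact hbbfin0
    | succ N ih =>
      refine ne_top_of_le_ne_top ?_ (hbbrec N)
      exact ENNReal.add_ne_top.2 ⟨ENNReal.mul_ne_top ENNReal.ofReal_ne_top ih,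
        ENNReal.mul_ne_top ENNReal.ofReal_ne_top (ne_top_of_le_ne_top one_ne_top (hjj1 N))⟩
  have haNbb : ∀ N, aN N ≤ bb N := by
    intro N
    refine lintegral_mono (Rpow_mono hd.hsm hJ measurable_const hd.VbMeas hd.Vb1 ?_ N)
    intro j
    exact iter_fin hd hνVb hd.VbMeas zero_le_one zero_le_one
      (fun x => by simpa using (Vb_fab hd x)) j
  -- pass to reals
  set jr : ℕ → ℝ := fun N => (jj N).toReal with hjr
  set br : ℕ → ℝ := fun N => (bb N).toReal with hbr
  have hjrfin : ∀ N, jj N ≠ ∞ := fun N => ne_top_of_le_ne_top one_ne_top (hjj1 N)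
  have hjr0 : Tendsto jr atTop (nhds 0) := by
    have := (ENNReal.tendsto_toReal (a := 0) (by simp)).comp hjj0
    rw [ENNReal.toReal_zero] at this
    exact this
  have hjrnn : ∀ N, 0 ≤ jr N := fun N => ENNReal.toReal_nonneg
  have hbrnn : ∀ N, 0 ≤ br N := fun N => ENNReal.toReal_nonneg
  have hjr1 : ∀ N, jr N ≤ 1 := fun N => by
    rw [hjr]
    calc (jj N).toReal ≤ (1:ℝ≥0∞).toReal :=
          (ENNReal.toReal_le_toReal (hjrfin N) one_ne_top).2 (hjj1 N)
      _ = 1 := by simp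
  have hbrrec : ∀ N, br (N+1) ≤ l * br N + (K-l) * jr N := by
    intro N
    have hrhsfin : ENNReal.ofReal l * bb N + ENNReal.ofReal (K-l) * jj N ≠ ∞ :=
      ENNReal.add_ne_top.2 ⟨ENNReal.mul_ne_top ENNReal.ofReal_ne_top (hbbfin N),
        ENNReal.mul_ne_top ENNReal.ofReal_ne_top (hjrfin N)⟩
    have h1 : br (N+1) ≤ (ENNReal.ofReal l * bb N + ENNReal.ofReal (K-l) * jj N).toReal :=
      (ENNReal.toReal_le_toReal (hbbfin (N+1)) hrhsfin).2 (hbbrec N)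
    rw [ENNReal.toReal_add (ENNReal.mul_ne_top ENNReal.ofReal_ne_top (hbbfin N))
      (ENNReal.mul_ne_top ENNReal.ofReal_ne_top (hjrfin N)), ENNReal.toReal_mul,
      ENNReal.toReal_mul, ENNReal.toReal_ofReal hd.hl0.le,
      ENNReal.toReal_ofReal (by linarith [hd.lK])] at h1
    exact h1
  set B : ℝ := max (br 0) ((K-l)/(1-l)) with hB
  have h1l : (0:ℝ) < 1 - l := by linarith [hd.hl1]
  have hKl : (0:ℝ) ≤ K - l := by linarith [hd.lK]
  have hBnn : 0 ≤ B := le_trans (hbrnn 0) (le_max_left _ _)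
  have hbrB : ∀ N, br N ≤ B := by
    intro N
    induction N with
    | zero => exact le_max_left _ _
    | succ N ih =>
      have hCB : (K-l)/(1-l) ≤ B := le_max_right _ _
      have := hbrrec N
      have h2 : l * br N + (K-l) * jr N ≤ l * B + (K-l) * 1 := by
        gcongr
        · exact hd.hl0.le
        · exact hjr1 N
      have h3 : l * B + (K - l) ≤ B := by
        rw [div_le_iff₀ h1l] at hCB
        nlinarith
      linarith
  -- the ε–argument
  intro δ hδ
  have hδ2 : 0 < δ/2 := by linarith
  set η : ℝ := (δ/2) * (1-l) / (K-l+1) with hη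
  have hηpos : 0 < η := by positivity
  obtain ⟨N₀, hN₀⟩ := eventually_atTop.1 (hjr0.eventually (gt_mem_nhds hηpos))
  have hC : (K-l) * η / (1-l) ≤ δ/2 := by
    rw [hη]
    rw [div_le_iff₀ h1l]
    have h4 : (K-l) / (K-l+1) ≤ 1 := by
      rw [div_le_one (by linarith)]
      linarith
    calc (K-l) * (δ/2 * (1-l) / (K-l+1)) = ((K-l)/(K-l+1)) * (δ/2) * (1-l) := by ring
      _ ≤ 1 * (δ/2) * (1-l) := by
          have := mul_le_mul_of_nonneg_right (mul_le_mul_of_nonneg_right h4 hδ2.le) h1l.le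
          linarith [this]
      _ = δ/2 * (1-l) := by ring
  have hiter : ∀ k, br (N₀ + k) ≤ l^k * B + (K-l) * η / (1-l) := by
    intro k
    induction k with
    | zero =>
      simp only [pow_zero, one_mul, Nat.add_zero]
      have : 0 ≤ (K-l) * η / (1-l) := by positivity
      linarith [hbrB N₀]
    | succ k ih =>
      have hj : jr (N₀ + k) < η := hN₀ (N₀ + k) (Nat.le_add_right _ _)
      have h5 := hbrrec (N₀ + k)
      have h6 : l * br (N₀+k) ≤ l * (l^k * B + (K-l) * η / (1-l)) :=
        mul_le_mul_of_nonneg_left ih hd.hl0.le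
      have h7 : (K-l) * jr (N₀+k) ≤ (K-l) * η :=
        mul_le_mul_of_nonneg_left hj.le hKl
      have h8 : l * ((K-l) * η / (1-l)) + (K-l) * η = (K-l) * η / (1-l) := by
        field_simp
        ring
      have h9 : (N₀ + (k+1)) = (N₀ + k) + 1 := by omega
      rw [h9, pow_succ]
      calc br ((N₀+k)+1) ≤ l * br (N₀+k) + (K-l) * jr (N₀+k) := h5
        _ ≤ l * (l^k * B + (K-l) * η / (1-l)) + (K-l) * η := by linarith
        _ = l^k * l * B + (l * ((K-l) * η / (1-l)) + (K-l) * η) := by ring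
        _ = l^k * l * B + (K-l) * η / (1-l) := by rw [h8]
  obtain ⟨k, hk⟩ := exists_pow_lt_of_lt_one (x := δ/2 / (B+1)) (by positivity) hd.hl1
  have hlkB : l^k * B < δ/2 := by
    have hB1 : (0:ℝ) < B + 1 := by linarith
    rw [lt_div_iff₀ hB1] at hk
    nlinarith [pow_nonneg hd.hl0.le k]
  refine ⟨N₀ + k, ?_⟩
  have h11 : br (N₀ + k) < δ := by
    have := hiter k
    linarith [hC]
  have h12 : (aN (N₀+k)).toReal < δ := by
    have h13 : (aN (N₀+k)).toReal ≤ br (N₀+k) :=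
      (ENNReal.toReal_le_toReal (ne_top_of_le_ne_top one_ne_top (haN1 _))
        (hbbfin _)).2 (haNbb _)
    linarith
  exact (ENNReal.lt_ofReal_iff_toReal_lt
    (ne_top_of_le_ne_top one_ne_top (haN1 _))).2 h12

end AN

end SplitDrift
namespace SplitDrift

section Count

lemma tsum_ite_lt (m : ℕ) : ∑' (n:ℕ), (if n < m then (1:ℝ≥0∞) else 0) = m := by
  rw [tsum_eq_sum (s := Finset.range m) (fun k hk => if_neg (by simpa using hk))]
  rw [Finset.sum_congr rfl (fun k hk => if_pos (Finset.mem_range.1 hk))]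
  simp

lemma sum_range_odd (m : ℕ) : ∑ n ∈ Finset.range m, (2*n+1) = m^2 := by
  induction m with
  | zero => simp
  | succ m ih =>
    rw [Finset.sum_range_succ, ih]
    ring

lemma tsum_ite_lt_sq (m : ℕ) :
    ∑' (n:ℕ), (if n < m then (2*(n:ℝ≥0∞)+1) else 0) = (m:ℝ≥0∞)^2 := by
  rw [tsum_eq_sum (s := Finset.range m) (fun k hk => if_neg (by simpa using hk))]
  rw [Finset.sum_congr rfl (fun k hk => if_pos (Finset.mem_range.1 hk))]
  have : ∀ n : ℕ, (2*(n:ℝ≥0∞)+1) = ((2*n+1 : ℕ) : ℝ≥0∞) := by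
    intro n
    push_cast
    ring
  rw [Finset.sum_congr rfl (fun n _ => this n), ← Nat.cast_sum, sum_range_odd]
  push_cast
  ring

variable {Ω : Type*} {G : ℕ → Ω → Bool}

lemma mem_An_iff {ω : Ω} (hrec : ∀ m : ℕ, ∃ n : ℕ, m < n ∧ G (n-1) ω = true) (n : ℕ) :
    ω ∈ An G n ↔ n < regTime G 1 ω := by
  have hre : regTime G 1 ω = sInf {k : ℕ | 0 < k ∧ G (k-1) ω = true} := rfl
  have hne : {k : ℕ | 0 < k ∧ G (k-1) ω = true}.Nonempty := by
    obtain ⟨k, hk0, hkG⟩ := hrec 0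
    exact ⟨k, hk0, hkG⟩
  have hmem := Nat.sInf_mem hne
  constructor
  · intro h
    by_contra hlt
    push_neg at hlt
    rw [hre] at hlt
    have h1 : 0 < sInf {k : ℕ | 0 < k ∧ G (k-1) ω = true} := hmem.1
    have h2 : G (sInf {k : ℕ | 0 < k ∧ G (k-1) ω = true} - 1) ω = true := hmem.2
    have h3 : sInf {k : ℕ | 0 < k ∧ G (k-1) ω = true} - 1 < n := by omega
    have := h _ h3
    rw [h2] at this
    exact Bool.noConfusion this
  · intro h i hi
    by_contra hG
    have hGt : G i ω = true := by
      cases hGi : G i ω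
      · exact absurd hGi hG
      · rfl
    have h4 : (i+1) ∈ {k : ℕ | 0 < k ∧ G (k-1) ω = true} := ⟨Nat.succ_pos i, by
      simpa using hGt⟩
    have h5 := Nat.sInf_le h4
    rw [hre] at h
    omega

end Count

section RpowW

variable {𝒳 : Type*} [MeasurableSpace 𝒳] {P : Kernel 𝒳 𝒳} [IsMarkovKernel P]
variable {J : Set 𝒳} {β : ℝ} {ν : Measure 𝒳} [IsProbabilityMeasure ν]

lemma Rpow_zero_fun (k : ℕ) : Rpow P J β ν k (fun _ => (0:ℝ≥0∞)) = fun _ => (0:ℝ≥0∞) := by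
  induction k with
  | zero => rfl
  | succ k ih =>
    rw [Rpow_succ]
    have : Rop P J β ν (fun _ => (0:ℝ≥0∞)) = fun _ => (0:ℝ≥0∞) := by
      funext x
      unfold Rop
      simp
    rw [this, ih]

lemma Rpow_wseq_eq (hsm : SmallHyp P J β ν) (hJ : MeasurableSet J) (k M : ℕ) :
    Rpow P J β ν k (wseq P J β ν M) =
      fun x => ∑ m ∈ Finset.range M, Rpow P J β ν (k+1+m) (fun _ => (1:ℝ≥0∞)) x := by
  induction M with
  | zero =>
    have h0 : wseq P J β ν 0 = fun _ => (0:ℝ≥0∞) := by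
      funext x; simp [wseq]
    rw [h0, Rpow_zero_fun]
    funext x
    simp
  | succ M ih =>
    have hdec : wseq P J β ν (M+1) = fun x => wseq P J β ν M x +
        Rpow P J β ν (M+1) (fun _ => (1:ℝ≥0∞)) x := by
      funext x; simp [wseq, Finset.sum_range_succ]
    rw [hdec, Rpow_add hsm hJ (wseq_meas hJ M)
      (Rpow_measurable hJ measurable_const (M+1))
      (fun j => by
        refine ne_top_of_le_ne_top (by simp : ((M:ℝ≥0∞)) ≠ ∞) ?_
        calc ∫⁻ y, Rpow P J β ν j (wseq P J β ν M) y ∂ν ≤ ∫⁻ _, (M:ℝ≥0∞) ∂ν :=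
              lintegral_mono (Rpow_le_const (wseq_le M) j)
          _ = M := by simp)
      (fun j => by
        refine ne_top_of_le_ne_top one_ne_top ?_
        calc ∫⁻ y, Rpow P J β ν j (Rpow P J β ν (M+1) (fun _ => (1:ℝ≥0∞))) y ∂ν
            ≤ ∫⁻ _, 1 ∂ν := lintegral_mono (Rpow_le_const (Rpow_one_le_one (M+1)) j)
          _ = 1 := by simp) k, ih]
    funext x
    rw [Finset.sum_range_succ]
    congr 1
    rw [Rpow_comp]
    congr 1
    omega

end RpowW

end SplitDrift
open SplitDrift in
/-- **Theorem 6.3 (i)**: under the small-set assumption and the one-step drift condition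
`PV ≤ λV` off `J`, `PV ≤ K` on `J` (with `V ≥ 1`, `λ ∈ (0,1)`), with `π` invariant for `P`,
the constant `n₀ = E_ν τ₁²/E_ν τ₁ − 1` of the split chain started from `X 0 ∼ ν` satisfies
`n₀ ≤ 2 [λ(π(V) − 1)/(1 − λ) + (K − λ)/(β(1 − λ)) − 1]`. -/
theorem drift_overshoot_constant_bound
    {Ω 𝒳 : Type*} [MeasurableSpace Ω] [MeasurableSpace 𝒳]
    (μ : Measure Ω) [IsProbabilityMeasure μ]
    (P : Kernel 𝒳 𝒳) [IsMarkovKernel P]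
    (π ν : Measure 𝒳) [IsProbabilityMeasure π] [IsProbabilityMeasure ν]
    (hinv : Kernel.Invariant P π)
    (J : Set 𝒳) (hJmeas : MeasurableSet J) (hJpos : 0 < π J)
    (β : ℝ) (hβpos : 0 < β) (hβle : β ≤ 1)
    (hsmall : ∀ x, ∀ A : Set 𝒳, MeasurableSet A →
      ENNReal.ofReal β * J.indicator (fun _ => (1 : ℝ≥0∞)) x * ν A ≤ P x A)
    (V : 𝒳 → ℝ) (hVmeas : Measurable V) (hV1 : ∀ x, 1 ≤ V x)
    (l K : ℝ) (hl0 : 0 < l) (hl1 : l < 1)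
    (hdrift_off : ∀ x ∉ J, ∫⁻ y, ENNReal.ofReal (V y) ∂(P x) ≤ ENNReal.ofReal (l * V x))
    (hdrift_on : ∀ x ∈ J, ∫⁻ y, ENNReal.ofReal (V y) ∂(P x) ≤ ENNReal.ofReal K)
    (hVint : Integrable V π)
    (X : ℕ → Ω → 𝒳) (G : ℕ → Ω → Bool)
    (hchain : IsSplitChain μ P J β ν X G)
    (hX0 : μ.map (X 0) = ν) :
    (∫⁻ ω, ((regTime G 1 ω : ℝ≥0∞)) ^ 2 ∂μ) / (∫⁻ ω, (regTime G 1 ω : ℝ≥0∞) ∂μ) - 1 ≤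
      ENNReal.ofReal
        (2 * (l * ((∫ x, V x ∂π) - 1) / (1 - l) + (K - l) / (β * (1 - l)) - 1)) := by
  classical
  -- basic context
  have hJne : J.Nonempty := nonempty_of_measure_ne_zero (ne_of_gt hJpos)
  obtain ⟨x₀, hx₀⟩ := hJne
  have hsm : SmallHyp P J β ν := by
    intro x
    refine Measure.le_iff.2 fun A hA => ?_
    have h := hsmall x A hA
    rw [Measure.smul_apply, smul_eq_mul]
    exact h
  have hK1 : 1 ≤ K := by
    have h1 : (1:ℝ≥0∞) ≤ ENNReal.ofReal K := by
      calc (1:ℝ≥0∞) = ∫⁻ _, 1 ∂(P x₀) := by simp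
        _ ≤ ∫⁻ y, ENNReal.ofReal (V y) ∂(P x₀) :=
            lintegral_mono fun y => ENNReal.one_le_ofReal.2 (hV1 y)
        _ ≤ ENNReal.ofReal K := hdrift_on x₀ hx₀
    exact ENNReal.one_le_ofReal.1 h1
  have hd : DriftCtx P J β ν V l K :=
    ⟨hJmeas, hβpos, hβle, hsm, hVmeas, hV1, hl0, hl1, hK1, hdrift_off, hdrift_on⟩
  have hβE0 : ENNReal.ofReal β ≠ 0 := by
    simp [ENNReal.ofReal_eq_zero, not_le, hβpos]
  -- V-integral facts
  have hVae : 0 ≤ᵐ[π] V :=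
    Filter.Eventually.of_forall fun x => le_trans zero_le_one (hV1 x)
  have hπVb_eq : ENNReal.ofReal (∫ x, V x ∂π) = ∫⁻ x, ENNReal.ofReal (V x) ∂π :=
    MeasureTheory.ofReal_integral_eq_lintegral_ofReal hVint hVae
  have hπVb : ∫⁻ x, ENNReal.ofReal (V x) ∂π ≠ ∞ := by
    rw [← hπVb_eq]; exact ENNReal.ofReal_ne_top
  have hνVb : ∫⁻ y, ENNReal.ofReal (V y) ∂ν ≠ ∞ := by
    have h2 : ENNReal.ofReal β * ∫⁻ y, ENNReal.ofReal (V y) ∂ν ≤ ENNReal.ofReal K := by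
      have h3 := hsm.lint x₀ (fun y => ENNReal.ofReal (V y))
      rw [bJ_mem hx₀] at h3
      exact le_trans h3 (hdrift_on x₀ hx₀)
    intro htop
    rw [htop, ENNReal.mul_top hβE0] at h2
    exact (by simp : ¬ (⊤:ℝ≥0∞) ≤ ENNReal.ofReal K) h2
  have hπV1 : 1 ≤ ∫ x, V x ∂π := by
    calc (1:ℝ) = ∫ _, (1:ℝ) ∂π := by simp
      _ ≤ ∫ x, V x ∂π := integral_mono (integrable_const 1) hVint hV1
  -- sequences
  set xk : ℕ → ℝ≥0∞ := fun n => ∫⁻ y, Rpow P J β ν n (fun _ => (1:ℝ≥0∞)) y ∂ν with hxk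
  set S : ℝ≥0∞ := ∑' n, xk n with hSdef
  set U : ℝ≥0∞ := ∑' n : ℕ, (n : ℝ≥0∞) * xk n with hUdef
  set c : ℝ≥0∞ := ENNReal.ofReal β * π J with hcdef
  set Z : ℝ≥0∞ := ∑' k, ∫⁻ y, Rpow P J β ν k (gE V l K β) y ∂ν with hZdef
  have hc0 : c ≠ 0 := mul_ne_zero hβE0 (ne_of_gt hJpos)
  have hctop : c ≠ ∞ := ENNReal.mul_ne_top ENNReal.ofReal_ne_top (measure_ne_top π J)
  -- chain bridge
  have hpn : ∀ n, μ (An G n) = xk n := by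
    intro n
    have h := bridge hJmeas hsm hβle hchain hX0 n (fun _ => 1) measurable_const
      (fun _ => le_rfl)
    rw [setLIntegral_one] at h
    exact h
  -- a.e. identification of regTime with An
  have hAe : ∀ᵐ ω ∂μ, ∀ n : ℕ, (ω ∈ An G n ↔ n < regTime G 1 ω) :=
    hchain.recur.mono fun ω hω n => mem_An_iff hω n
  -- first moment
  have hτ1 : ∫⁻ ω, ((regTime G 1 ω : ℝ≥0∞)) ∂μ = S := by
    have heq : ∀ᵐ ω ∂μ, ((regTime G 1 ω : ℝ≥0∞)) =
        ∑' n, (An G n).indicator (fun _ => (1:ℝ≥0∞)) ω := by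
      refine hAe.mono fun ω hω => ?_
      calc ((regTime G 1 ω : ℝ≥0∞)) =
            ∑' n, (if n < regTime G 1 ω then (1:ℝ≥0∞) else 0) := (tsum_ite_lt _).symm
        _ = ∑' n, (An G n).indicator (fun _ => (1:ℝ≥0∞)) ω := by
            refine tsum_congr fun n => ?_
            rw [Set.indicator_apply]
            exact if_congr (hω n).symm rfl rfl
    rw [lintegral_congr_ae heq, lintegral_tsum (fun n =>
      (measurable_const.indicator (An_measurableSet hchain.measG n)).aemeasurable)]
    rw [hSdef]
    refine tsum_congr fun n => ?_
    rw [lintegral_indicator (An_measurableSet hchain.measG n), setLIntegral_one, hpn n]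
  -- second moment
  have hτ2 : ∫⁻ ω, ((regTime G 1 ω : ℝ≥0∞))^2 ∂μ = 2*U + S := by
    have heq : ∀ᵐ ω ∂μ, ((regTime G 1 ω : ℝ≥0∞))^2 =
        ∑' n, (An G n).indicator (fun _ => (2*(n:ℝ≥0∞)+1)) ω := by
      refine hAe.mono fun ω hω => ?_
      calc ((regTime G 1 ω : ℝ≥0∞))^2 =
            ∑' n, (if n < regTime G 1 ω then (2*(n:ℝ≥0∞)+1) else 0) :=
            (tsum_ite_lt_sq _).symm
        _ = ∑' n, (An G n).indicator (fun _ => (2*(n:ℝ≥0∞)+1)) ω := by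
            refine tsum_congr fun n => ?_
            rw [Set.indicator_apply]
            exact if_congr (hω n).symm rfl rfl
    rw [lintegral_congr_ae heq, lintegral_tsum (fun n =>
      (measurable_const.indicator (An_measurableSet hchain.measG n)).aemeasurable)]
    have h6 : ∀ n : ℕ, ∫⁻ ω, (An G n).indicator (fun _ => (2*(n:ℝ≥0∞)+1)) ω ∂μ =
        (2*(n:ℝ≥0∞)+1) * xk n := by
      intro n
      rw [lintegral_indicator (An_measurableSet hchain.measG n), setLIntegral_const, hpn n]
    rw [tsum_congr h6]
    have h7 : ∀ n : ℕ, (2*(n:ℝ≥0∞)+1) * xk n = 2*((n:ℝ≥0∞) * xk n) + xk n := by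
      intro n; ring
    rw [tsum_congr h7, ENNReal.tsum_add, ENNReal.tsum_mul_left, hUdef, hSdef]
  -- U ≤ Z
  have hUZ : U ≤ Z := by
    have h1 : ∀ n : ℕ, (n:ℝ≥0∞) * xk n = ∑' k : ℕ, (if k < n then xk n else 0) := by
      intro n
      rw [tsum_eq_sum (s := Finset.range n) (fun k hk => if_neg (by simpa using hk)),
        Finset.sum_congr rfl (fun k hk => if_pos (Finset.mem_range.1 hk)),
        Finset.sum_const, Finset.card_range, nsmul_eq_mul]
    rw [hUdef, tsum_congr h1, ENNReal.tsum_comm, hZdef]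
    refine ENNReal.tsum_le_tsum fun k => ?_
    rw [ENNReal.tsum_eq_iSup_nat]
    refine iSup_le fun M => ?_
    have hfilter : ∑ n ∈ Finset.range M, (if k < n then xk n else 0) =
        ∑ n ∈ Finset.Ico (k+1) M, xk n := by
      rw [← Finset.sum_filter]
      congr 1
      ext n
      simp only [Finset.mem_filter, Finset.mem_range, Finset.mem_Ico]
      omega
    rw [hfilter, Finset.sum_Ico_eq_sum_range]
    have h2 : ∑ m ∈ Finset.range (M - (k+1)), xk (k+1+m) =
        ∫⁻ y, Rpow P J β ν k (wseq P J β ν (M - (k+1))) y ∂ν := by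
      rw [Rpow_wseq_eq hsm hJmeas k (M - (k+1)),
        lintegral_finset_sum _ (fun m _ => Rpow_measurable hJmeas measurable_const (k+1+m))]
    rw [h2]
    exact lintegral_mono (Rpow_mono hsm hJmeas (wseq_meas hJmeas _) (gE_meas hd)
      (wseq_le_gE hd hνVb _) (gE_iter_fin hd hνVb) k)
  -- telescoping with f = 1
  have htel1 : ∀ N, (1:ℝ≥0∞) = ∫⁻ x, Rpow P J β ν N (fun _ => (1:ℝ≥0∞)) x ∂π +
      c * ∑ k ∈ Finset.range N, xk k := by
    intro N
    have h := tel (π := π) hJmeas hsm hinv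
      (measurable_const : Measurable (fun _ : 𝒳 => (1:ℝ≥0∞))) N
    simpa using h
  -- cS ≤ 1
  have hcS_le : c * S ≤ 1 := by
    rw [hSdef, ← ENNReal.tsum_mul_left, ENNReal.tsum_eq_iSup_nat]
    refine iSup_le fun N => ?_
    rw [← Finset.mul_sum]
    calc c * ∑ k ∈ Finset.range N, xk k ≤
          ∫⁻ x, Rpow P J β ν N (fun _ => (1:ℝ≥0∞)) x ∂π +
            c * ∑ k ∈ Finset.range N, xk k := le_add_self
      _ = 1 := (htel1 N).symm
  -- cS ≥ 1
  have hcS_ge : 1 ≤ c * S := by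
    by_contra hlt
    push_neg at hlt
    have hcStop : c * S ≠ ∞ := ne_top_of_lt (lt_of_lt_of_le hlt le_top)
    set δE : ℝ≥0∞ := 1 - c * S with hδE
    have hδE0 : 0 < δE := tsub_pos_of_lt hlt
    have hδEtop : δE ≠ ∞ := ne_top_of_le_ne_top one_ne_top tsub_le_self
    have hδr0 : 0 < δE.toReal := ENNReal.toReal_pos (ne_of_gt hδE0) hδEtop
    obtain ⟨N, hN⟩ := aN_small hd hinv hπVb hνVb δE.toReal hδr0
    rw [ENNReal.ofReal_toReal hδEtop] at hN
    have h8 : c * ∑ k ∈ Finset.range N, xk k ≤ c * S := by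
      refine mul_le_mul_right ?_ c
      rw [hSdef]
      exact ENNReal.sum_le_tsum (Finset.range N)
    have h9 : (1:ℝ≥0∞) < δE + c * S := by
      calc (1:ℝ≥0∞) = ∫⁻ x, Rpow P J β ν N (fun _ => (1:ℝ≥0∞)) x ∂π +
            c * ∑ k ∈ Finset.range N, xk k := htel1 N
        _ ≤ ∫⁻ x, Rpow P J β ν N (fun _ => (1:ℝ≥0∞)) x ∂π + c * S :=
            add_le_add_right h8 _
        _ < δE + c * S := by
            exact ENNReal.add_lt_add_right hcStop hN
    rw [hδE, tsub_add_cancel_of_le hlt.le] at h9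
    exact lt_irrefl _ h9
  have hcS : c * S = 1 := le_antisymm hcS_le hcS_ge
  -- S facts
  have hS1 : (1:ℝ≥0∞) ≤ S := by
    have hx0 : xk 0 = 1 := by
      rw [hxk]
      simp [Rpow_zero]
    calc (1:ℝ≥0∞) = xk 0 := hx0.symm
      _ ≤ S := ENNReal.le_tsum 0
  have hS0 : S ≠ 0 := by
    intro h
    rw [h] at hS1
    simp at hS1
  have hStop : S ≠ ∞ := by
    intro h
    rw [h, ENNReal.mul_top hc0] at hcS
    exact (by simp : (⊤:ℝ≥0∞) ≠ 1) hcS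
  have hSeq : S = c⁻¹ := by
    have h10 : c⁻¹ * (c * S) = c⁻¹ * 1 := by rw [hcS]
    rwa [← mul_assoc, ENNReal.inv_mul_cancel hc0 hctop, one_mul, mul_one] at h10
  -- cZ ≤ π(gE)
  have hcZ : c * Z ≤ ∫⁻ x, gE V l K β x ∂π := by
    rw [hZdef, ← ENNReal.tsum_mul_left, ENNReal.tsum_eq_iSup_nat]
    refine iSup_le fun N => ?_
    rw [← Finset.mul_sum]
    calc c * ∑ k ∈ Finset.range N, ∫⁻ y, Rpow P J β ν k (gE V l K β) y ∂ν ≤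
          ∫⁻ x, Rpow P J β ν N (gE V l K β) x ∂π +
            c * ∑ k ∈ Finset.range N, ∫⁻ y, Rpow P J β ν k (gE V l K β) y ∂ν := le_add_self
      _ = ∫⁻ x, gE V l K β x ∂π := (tel hJmeas hsm hinv (gE_meas hd) N).symm
  have hZtop : Z ≠ ∞ := by
    intro h
    rw [h, ENNReal.mul_top hc0] at hcZ
    have h11 : ∫⁻ x, gE V l K β x ∂π ≠ ∞ := by
      refine ne_top_of_le_ne_top ?_ (lintegral_mono (gE_le (V := V) (l := l) (K := K) (β := β)))
      rw [lintegral_add_right _ measurable_const, lintegral_const_mul _ hd.VbMeas]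
      simp only [lintegral_const, measure_univ, mul_one]
      exact ENNReal.add_ne_top.2 ⟨ENNReal.mul_ne_top ENNReal.ofReal_ne_top hπVb,
        ENNReal.ofReal_ne_top⟩
    exact h11 (top_le_iff.1 hcZ)
  have hZle : Z ≤ (∫⁻ x, gE V l K β x ∂π) * S := by
    have h12 : c⁻¹ * (c * Z) ≤ c⁻¹ * ∫⁻ x, gE V l K β x ∂π := mul_le_mul_right hcZ _
    rw [← mul_assoc, ENNReal.inv_mul_cancel hc0 hctop, one_mul] at h12
    calc Z ≤ c⁻¹ * ∫⁻ x, gE V l K β x ∂π := h12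
      _ = (∫⁻ x, gE V l K β x ∂π) * S := by rw [hSeq, mul_comm]
  -- value of π(gE)
  have hπgE : ∫⁻ x, gE V l K β x ∂π =
      ENNReal.ofReal (l / (1-l) * ((∫ x, V x ∂π) - 1) + ((K-l)/(β*(1-l)) - 1)) := by
    have hint : ∫⁻ x, (ENNReal.ofReal (V x) - 1) ∂π =
        ENNReal.ofReal ((∫ x, V x ∂π) - 1) := by
      rw [lintegral_sub measurable_const (by simp)
        (Filter.Eventually.of_forall hd.Vb1), ← hπVb_eq]
      simp only [lintegral_const, measure_univ, mul_one]
      rw [← ENNReal.ofReal_one, ← ENNReal.ofReal_sub _ zero_le_one]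
    unfold gE
    rw [lintegral_add_right _ measurable_const,
      lintegral_const_mul _ (hd.VbMeas.sub_const _), hint]
    simp only [lintegral_const, measure_univ, mul_one]
    rw [← ENNReal.ofReal_mul (alpha_nonneg hd),
      ← ENNReal.ofReal_add (mul_nonneg (alpha_nonneg hd) (by linarith)) (gamma_nonneg hd)]
  -- assemble
  rw [hτ1, hτ2]
  have hRHS : ENNReal.ofReal
      (2 * (l * ((∫ x, V x ∂π) - 1) / (1 - l) + (K - l) / (β * (1 - l)) - 1)) =
      2 * ∫⁻ x, gE V l K β x ∂π := by
    rw [hπgE, ← ENNReal.ofReal_ofNat 2, ← ENNReal.ofReal_mul (by norm_num : (0:ℝ) ≤ 2)]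
    congr 1
    ring
  rw [hRHS]
  have hdiv : (2*U + S)/S = 2*U/S + 1 := by
    rw [div_eq_mul_inv, add_mul, ← div_eq_mul_inv, ENNReal.mul_inv_cancel hS0 hStop]
  rw [hdiv, ENNReal.add_sub_cancel_right one_ne_top, ENNReal.div_le_iff hS0 hStop]
  calc 2*U ≤ 2*Z := mul_le_mul_right hUZ 2
    _ ≤ 2*((∫⁻ x, gE V l K β x ∂π) * S) := mul_le_mul_right hZle 2
    _ = 2 * (∫⁻ x, gE V l K β x ∂π) * S := by ring
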